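/- arXiv:2506.15441 — 3 statements merged into one kernel-verified Lean document; each statement's English description precedes it below -/
import Mathlib

section
/- In the discrete lm-SCM for the motivating example (Figure 1c), under Positivity, the context-parameterized AIPW score is robust to misspecification of the outcome model: for arbitrary functions Q̃₁ : 𝒲 × 𝒴₀ × {0,1} → ℝ and Q̃₀ : 𝒲 × {0,1} → ℝ, with the true propensities of the Nuisance functions, E[ (Q̃_R(1) − Q̃_R(0)) + (A − π_R) / (π_R (1 − π_R)) · (Y₁ − Q̃_R(A)) ] = θ, where pointwise on Ω, Q̃_R(a) := if R = 1 then Q̃₁(W, Y₀, a) else Q̃₀(W, a), and π_R := if R = 1 then π₁(W, Y₀) else π₀(W). -/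
open MeasureTheory ProbabilityTheory

/-- Conditional probability of `S` given the event `E`: `μ(S ∩ E) / μ(E)`. -/
noncomputable def cprob {Ω : Type*} [MeasurableSpace Ω] (μ : Measure Ω) (S E : Set Ω) : ENNReal :=
  μ (S ∩ E) / μ E

/-- Conditional expectation of `X` given the event `E`: `μ(E)⁻¹ * ∫_E X dμ`. -/
noncomputable def cexp {Ω : Type*} [MeasurableSpace Ω] (μ : Measure Ω) (X : Ω → ℝ) (E : Set Ω) : ℝ :=
  ((μ E).toReal)⁻¹ * ∫ ω in E, X ω ∂μ

lemma aux_indep_setIntegral {Ω : Type*} {m₁ m₂ : MeasurableSpace Ω}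
    [mΩ : MeasurableSpace Ω] {μ : Measure Ω}
    [IsProbabilityMeasure μ] (h₁ : m₁ ≤ mΩ) (h₂ : m₂ ≤ mΩ)
    (hind : Indep m₁ m₂ μ) {S : Set Ω} (hS : MeasurableSet[m₁] S)
    {g : Ω → ℝ} (hg : Measurable[m₂] g) :
    ∫ ω in S, g ω ∂μ = (μ S).toReal * ∫ ω, g ω ∂μ := by
  have hSm : MeasurableSet[mΩ] S := h₁ _ hS
  have hgm : Measurable[mΩ] g := hg.mono h₂ le_rfl
  have hXm₁ : Measurable[m₁] (S.indicator (1 : Ω → ℝ)) :=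
    (@measurable_one ℝ Ω _ m₁ _).indicator hS
  have hIF : IndepFun (S.indicator (1 : Ω → ℝ)) g μ :=
    indep_of_indep_of_le_left
      (indep_of_indep_of_le_right hind (measurable_iff_comap_le.mp hg))
      (measurable_iff_comap_le.mp hXm₁)
  have hmul := hIF.integral_mul_eq_mul_integral ((hXm₁.mono h₁ le_rfl).aestronglyMeasurable)
      hgm.aestronglyMeasurable
  have h1 : S.indicator g = (S.indicator (1 : Ω → ℝ)) * g := by
    funext ω; by_cases h : ω ∈ S <;> simp [h]
  have h2 : ∫ ω in S, g ω ∂μ = ∫ ω, S.indicator g ω ∂μ := (integral_indicator hSm).symm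
  have h3 : ∫ ω, S.indicator (1 : Ω → ℝ) ω ∂μ = (μ S).toReal := by
    exact integral_indicator_one (μ := μ) hSm
  rw [h2, h1, hmul, h3]

/-- In the discrete lm-SCM of Figure 1c, under positivity, the context-parameterized AIPW score is robust to misspecification of the outcome model. -/
theorem lmSCM_aipw_robust_outcome_misspecification
    {Ω 𝒲 𝒴₀ 𝒰₀ 𝒰R 𝒰A 𝒰Y : Type*}
    [MeasurableSpace Ω]
    [Fintype 𝒲] [Nonempty 𝒲] [MeasurableSpace 𝒲] [MeasurableSingletonClass 𝒲]
    [Fintype 𝒴₀] [Nonempty 𝒴₀] [MeasurableSpace 𝒴₀] [MeasurableSingletonClass 𝒴₀]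
    [MeasurableSpace 𝒰₀] [MeasurableSpace 𝒰R] [MeasurableSpace 𝒰A] [MeasurableSpace 𝒰Y]
    (μ : Measure Ω) [IsProbabilityMeasure μ]
    (W : Ω → 𝒲) (U₀ : Ω → 𝒰₀) (UR : Ω → 𝒰R) (UA : Ω → 𝒰A) (UY : Ω → 𝒰Y)
    (hW : Measurable W) (hU₀ : Measurable U₀) (hUR : Measurable UR)
    (hUA : Measurable UA) (hUY : Measurable UY)
    (hIndep : iIndep
      (![MeasurableSpace.comap W inferInstance, MeasurableSpace.comap U₀ inferInstance,
         MeasurableSpace.comap UR inferInstance, MeasurableSpace.comap UA inferInstance,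
         MeasurableSpace.comap UY inferInstance] : Fin 5 → MeasurableSpace Ω) μ)
    (f₀ : 𝒲 × 𝒰₀ → 𝒴₀) (hf₀ : Measurable f₀)
    (fR : 𝒲 × 𝒰R → Fin 2) (hfR : Measurable fR)
    (fA : 𝒲 × 𝒴₀ × 𝒰A → Fin 2) (hfA : Measurable fA)
    (gA : 𝒲 × 𝒰A → Fin 2) (hgA : Measurable gA)
    (fY : 𝒲 × 𝒴₀ × Fin 2 × 𝒰Y → ℝ) (hfY : Measurable fY)
    (gY : 𝒲 × Fin 2 × 𝒰Y → ℝ) (hgY : Measurable gY)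
    (Y₀ : Ω → 𝒴₀) (R A : Ω → Fin 2) (Y₁ : Ω → ℝ)
    (hY₀ : ∀ ω, Y₀ ω = f₀ (W ω, U₀ ω))
    (hR : ∀ ω, R ω = fR (W ω, UR ω))
    (hA : ∀ ω, A ω = if R ω = 1 then fA (W ω, Y₀ ω, UA ω) else gA (W ω, UA ω))
    (hY₁ : ∀ ω, Y₁ ω = if R ω = 1 then fY (W ω, Y₀ ω, A ω, UY ω) else gY (W ω, A ω, UY ω))
    (Ynat : Fin 2 → Ω → ℝ)
    (hYnat : ∀ (a : Fin 2) (ω : Ω),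
      Ynat a ω = if R ω = 1 then fY (W ω, Y₀ ω, a, UY ω) else gY (W ω, a, UY ω))
    (Yful : Fin 2 → Ω → ℝ)
    (hYful : ∀ (a : Fin 2) (ω : Ω), Yful a ω = fY (W ω, Y₀ ω, a, UY ω))
    (hIntY₁ : Integrable Y₁ μ)
    (hIntN0 : Integrable (Ynat 0) μ) (hIntN1 : Integrable (Ynat 1) μ)
    (hIntF0 : Integrable (Yful 0) μ) (hIntF1 : Integrable (Yful 1) μ)
    (hpos : ∀ (w : 𝒲) (y : 𝒴₀) (r a : Fin 2),
      0 < μ {ω | W ω = w ∧ Y₀ ω = y ∧ R ω = r ∧ A ω = a})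
    (π1 : 𝒲 → 𝒴₀ → ℝ)
    (hπ1 : ∀ (w : 𝒲) (y : 𝒴₀),
      π1 w y = (cprob μ {ω | A ω = 1} {ω | W ω = w ∧ Y₀ ω = y ∧ R ω = 1}).toReal)
    (π0 : 𝒲 → ℝ)
    (hπ0 : ∀ w : 𝒲, π0 w = (cprob μ {ω | A ω = 1} {ω | W ω = w ∧ R ω = 0}).toReal)
    :
    ∀ (Qt1 : 𝒲 → 𝒴₀ → Fin 2 → ℝ) (Qt0 : 𝒲 → Fin 2 → ℝ),
      ∫ ω, (((if R ω = 1 then Qt1 (W ω) (Y₀ ω) 1 else Qt0 (W ω) 1)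
              - (if R ω = 1 then Qt1 (W ω) (Y₀ ω) 0 else Qt0 (W ω) 0))
            + (((A ω : ℕ) : ℝ) - (if R ω = 1 then π1 (W ω) (Y₀ ω) else π0 (W ω)))
                / ((if R ω = 1 then π1 (W ω) (Y₀ ω) else π0 (W ω))
                    * (1 - (if R ω = 1 then π1 (W ω) (Y₀ ω) else π0 (W ω))))
                * (Y₁ ω - (if R ω = 1 then Qt1 (W ω) (Y₀ ω) (A ω) else Qt0 (W ω) (A ω)))) ∂μ
        = (∫ ω, Ynat 1 ω ∂μ) - (∫ ω, Ynat 0 ω ∂μ) := by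
  intro Qt1 Qt0
  -- measurability of the endogenous variables
  have hmY₀ : Measurable Y₀ := by
    have h : Y₀ = fun ω => f₀ (W ω, U₀ ω) := funext hY₀
    rw [h]; exact hf₀.comp (hW.prodMk hU₀)
  have hmR : Measurable R := by
    have h : R = fun ω => fR (W ω, UR ω) := funext hR
    rw [h]; exact hfR.comp (hW.prodMk hUR)
  have hmA : Measurable A := by
    have h : A = fun ω => if R ω = 1 then fA (W ω, Y₀ ω, UA ω) else gA (W ω, UA ω) := funext hA
    rw [h]
    exact Measurable.ite (hmR (measurableSet_singleton 1))
      (hfA.comp (hW.prodMk (hmY₀.prodMk hUA))) (hgA.comp (hW.prodMk hUA))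
  have hmcell : ∀ (w : 𝒲) (y : 𝒴₀) (r a : Fin 2),
      MeasurableSet {ω | W ω = w ∧ Y₀ ω = y ∧ R ω = r ∧ A ω = a} :=
    fun w y r a => (hW (measurableSet_singleton w)).inter
      ((hmY₀ (measurableSet_singleton y)).inter
        ((hmR (measurableSet_singleton r)).inter (hmA (measurableSet_singleton a))))
  have hr2 : ∀ r : Fin 2, r = 0 ∨ r = 1 := by decide
  -- the family of sigma algebras
  have h_le : ∀ i : Fin 5,
      (![MeasurableSpace.comap W inferInstance, MeasurableSpace.comap U₀ inferInstance,
         MeasurableSpace.comap UR inferInstance, MeasurableSpace.comap UA inferInstance,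
         MeasurableSpace.comap UY inferInstance] : Fin 5 → MeasurableSpace Ω) i
        ≤ (inferInstance : MeasurableSpace Ω) := by
    intro i
    fin_cases i
    · exact measurable_iff_comap_le.mp hW
    · exact measurable_iff_comap_le.mp hU₀
    · exact measurable_iff_comap_le.mp hUR
    · exact measurable_iff_comap_le.mp hUA
    · exact measurable_iff_comap_le.mp hUY
  -- product rule for events of the first four sources
  have hmeas4 : ∀ (s0 : Set 𝒲) (s1 : Set 𝒰₀) (s2 : Set 𝒰R) (s3 : Set 𝒰A),
      MeasurableSet s0 → MeasurableSet s1 → MeasurableSet s2 → MeasurableSet s3 →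
      μ (W ⁻¹' s0 ∩ U₀ ⁻¹' s1 ∩ UR ⁻¹' s2 ∩ UA ⁻¹' s3)
        = μ (W ⁻¹' s0) * μ (U₀ ⁻¹' s1) * μ (UR ⁻¹' s2) * μ (UA ⁻¹' s3) := by
    intro s0 s1 s2 s3 hs0 hs1 hs2 hs3
    have h := hIndep.meas_biInter (S := ({0, 1, 2, 3} : Finset (Fin 5)))
      (s := ![W ⁻¹' s0, U₀ ⁻¹' s1, UR ⁻¹' s2, UA ⁻¹' s3, Set.univ]) ?_
    · have hInter : (⋂ i ∈ ({0, 1, 2, 3} : Finset (Fin 5)),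
          (![W ⁻¹' s0, U₀ ⁻¹' s1, UR ⁻¹' s2, UA ⁻¹' s3, Set.univ]) i)
          = W ⁻¹' s0 ∩ U₀ ⁻¹' s1 ∩ UR ⁻¹' s2 ∩ UA ⁻¹' s3 := by
        ext ω
        simp [Set.mem_iInter, Finset.mem_insert, Set.inter_assoc, and_assoc]
      rw [hInter] at h
      rw [h]
      simp [Finset.prod_insert, mul_assoc]
    · intro i hi
      fin_cases hi
      · exact ⟨s0, hs0, rfl⟩
      · exact ⟨s1, hs1, rfl⟩
      · exact ⟨s2, hs2, rfl⟩
      · exact ⟨s3, hs3, rfl⟩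
  -- independence between the first four sources and U_Y
  have hintUY : ∀ (s0 : Set 𝒲) (s1 : Set 𝒰₀) (s2 : Set 𝒰R) (s3 : Set 𝒰A),
      MeasurableSet s0 → MeasurableSet s1 → MeasurableSet s2 → MeasurableSet s3 →
      ∀ (h : 𝒰Y → ℝ), Measurable h →
      ∫ ω in (W ⁻¹' s0 ∩ U₀ ⁻¹' s1 ∩ UR ⁻¹' s2 ∩ UA ⁻¹' s3), h (UY ω) ∂μ
        = (μ (W ⁻¹' s0 ∩ U₀ ⁻¹' s1 ∩ UR ⁻¹' s2 ∩ UA ⁻¹' s3)).toReal * ∫ ω, h (UY ω) ∂μ := by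
    intro s0 s1 s2 s3 hs0 hs1 hs2 hs3 h hh
    have hcompl : ({0, 1, 2, 3} : Set (Fin 5))ᶜ = {4} := by
      ext i; fin_cases i <;> simp
    have hind0 := indep_biSup_compl h_le hIndep ({0, 1, 2, 3} : Set (Fin 5))
    rw [hcompl] at hind0
    have hind : Indep
        (⨆ n ∈ ({0, 1, 2, 3} : Set (Fin 5)),
          (![MeasurableSpace.comap W inferInstance, MeasurableSpace.comap U₀ inferInstance,
            MeasurableSpace.comap UR inferInstance, MeasurableSpace.comap UA inferInstance,
            MeasurableSpace.comap UY inferInstance] : Fin 5 → MeasurableSpace Ω) n)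
        (MeasurableSpace.comap UY inferInstance) μ := by
      simpa using hind0
    have hle1 : (⨆ n ∈ ({0, 1, 2, 3} : Set (Fin 5)),
          (![MeasurableSpace.comap W inferInstance, MeasurableSpace.comap U₀ inferInstance,
            MeasurableSpace.comap UR inferInstance, MeasurableSpace.comap UA inferInstance,
            MeasurableSpace.comap UY inferInstance] : Fin 5 → MeasurableSpace Ω) n)
        ≤ (inferInstance : MeasurableSpace Ω) := by
      refine iSup₂_le fun i _ => h_le i
    have hmem : ∀ i ∈ ({0, 1, 2, 3} : Set (Fin 5)), ∀ (t : Set Ω),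
        MeasurableSet[(![MeasurableSpace.comap W inferInstance,
          MeasurableSpace.comap U₀ inferInstance,
          MeasurableSpace.comap UR inferInstance, MeasurableSpace.comap UA inferInstance,
          MeasurableSpace.comap UY inferInstance] : Fin 5 → MeasurableSpace Ω) i] t →
        MeasurableSet[⨆ n ∈ ({0, 1, 2, 3} : Set (Fin 5)),
          (![MeasurableSpace.comap W inferInstance, MeasurableSpace.comap U₀ inferInstance,
            MeasurableSpace.comap UR inferInstance, MeasurableSpace.comap UA inferInstance,
            MeasurableSpace.comap UY inferInstance] : Fin 5 → MeasurableSpace Ω) n] t := by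
      intro i hi t ht
      exact MeasurableSpace.le_def.mp (le_biSup _ hi) t ht
    have hS : MeasurableSet[⨆ n ∈ ({0, 1, 2, 3} : Set (Fin 5)),
        (![MeasurableSpace.comap W inferInstance, MeasurableSpace.comap U₀ inferInstance,
          MeasurableSpace.comap UR inferInstance, MeasurableSpace.comap UA inferInstance,
          MeasurableSpace.comap UY inferInstance] : Fin 5 → MeasurableSpace Ω) n]
        (W ⁻¹' s0 ∩ U₀ ⁻¹' s1 ∩ UR ⁻¹' s2 ∩ UA ⁻¹' s3) := by
      refine MeasurableSet.inter (MeasurableSet.inter (MeasurableSet.inter ?_ ?_) ?_) ?_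
      · exact hmem 0 (by simp) _ ⟨s0, hs0, rfl⟩
      · exact hmem 1 (by simp) _ ⟨s1, hs1, rfl⟩
      · exact hmem 2 (by simp) _ ⟨s2, hs2, rfl⟩
      · exact hmem 3 (by simp) _ ⟨s3, hs3, rfl⟩
    have hg : Measurable[MeasurableSpace.comap UY inferInstance] fun ω => h (UY ω) :=
      hh.comp (measurable_iff_comap_le.mpr le_rfl)
    exact aux_indep_setIntegral hle1 (measurable_iff_comap_le.mp hUY) hind hS hg
  -- the cells written as intersections of source events
  have hcellEq : ∀ (w : 𝒲) (y : 𝒴₀) (r a : Fin 2),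
      {ω | W ω = w ∧ Y₀ ω = y ∧ R ω = r ∧ A ω = a}
        = W ⁻¹' {w} ∩ U₀ ⁻¹' ((fun u => f₀ (w, u)) ⁻¹' {y})
            ∩ UR ⁻¹' ((fun u => fR (w, u)) ⁻¹' {r})
            ∩ UA ⁻¹' ((fun u => if r = 1 then fA (w, y, u) else gA (w, u)) ⁻¹' {a}) := by
    intro w y r a
    ext ω
    simp only [Set.mem_setOf_eq, Set.mem_inter_iff, Set.mem_preimage, Set.mem_singleton_iff]
    constructor
    · rintro ⟨h1, h2, h3, h4⟩
      refine ⟨⟨⟨h1, ?_⟩, ?_⟩, ?_⟩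
      · rw [← h1]; exact (hY₀ ω).symm.trans h2
      · rw [← h1]; exact (hR ω).symm.trans h3
      · rcases hr2 r with hr | hr
        · subst hr
          rw [if_neg (by decide)]
          rw [hA ω, if_neg (by rw [h3]; decide)] at h4
          rw [← h1, ← h4]
        · subst hr
          rw [if_pos rfl]
          rw [hA ω, if_pos h3] at h4
          rw [← h1, ← h2, ← h4]
    · rintro ⟨⟨⟨h1, h2⟩, h3⟩, h4⟩
      have hy : Y₀ ω = y := by rw [hY₀ ω, h1]; exact h2
      have hrr : R ω = r := by rw [hR ω, h1]; exact h3
      refine ⟨h1, hy, hrr, ?_⟩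
      rw [hA ω]
      rcases hr2 r with hr | hr
      · subst hr
        rw [if_neg (by rw [hrr]; decide), ← h4, if_neg (by decide), h1]
      · subst hr
        rw [if_pos (by rw [hrr]), ← h4, if_pos rfl, h1, hy]
  -- the master fact per context (w, y, r)
  have hkey : ∀ (w : 𝒲) (y : 𝒴₀) (r : Fin 2), ∃ N p m0 m1 : ℝ,
      0 < p ∧ p < 1 ∧
      (μ {ω | W ω = w ∧ Y₀ ω = y ∧ R ω = r ∧ A ω = 0}).toReal = N * (1 - p) ∧
      (μ {ω | W ω = w ∧ Y₀ ω = y ∧ R ω = r ∧ A ω = 1}).toReal = N * p ∧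
      (∀ a : Fin 2,
        ∫ ω in {ω | W ω = w ∧ Y₀ ω = y ∧ R ω = r ∧ A ω = a},
            (((if R ω = 1 then Qt1 (W ω) (Y₀ ω) 1 else Qt0 (W ω) 1)
              - (if R ω = 1 then Qt1 (W ω) (Y₀ ω) 0 else Qt0 (W ω) 0))
            + (((A ω : ℕ) : ℝ) - (if R ω = 1 then π1 (W ω) (Y₀ ω) else π0 (W ω)))
                / ((if R ω = 1 then π1 (W ω) (Y₀ ω) else π0 (W ω))
                    * (1 - (if R ω = 1 then π1 (W ω) (Y₀ ω) else π0 (W ω))))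
                * (Y₁ ω - (if R ω = 1 then Qt1 (W ω) (Y₀ ω) (A ω) else Qt0 (W ω) (A ω)))) ∂μ
          = (μ {ω | W ω = w ∧ Y₀ ω = y ∧ R ω = r ∧ A ω = a}).toReal
              * (((if r = 1 then Qt1 w y 1 else Qt0 w 1) - (if r = 1 then Qt1 w y 0 else Qt0 w 0))
                + (((a : ℕ) : ℝ) - p) / (p * (1 - p))
                    * ((if a = 1 then m1 else m0) - (if r = 1 then Qt1 w y a else Qt0 w a)))) ∧
      (∀ a a' : Fin 2,
        ∫ ω in {ω | W ω = w ∧ Y₀ ω = y ∧ R ω = r ∧ A ω = a}, Ynat a' ω ∂μ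
          = (μ {ω | W ω = w ∧ Y₀ ω = y ∧ R ω = r ∧ A ω = a}).toReal
              * (if a' = 1 then m1 else m0)) := by
    intro w y r
    have hs0 : MeasurableSet ((fun u => f₀ (w, u)) ⁻¹' {y}) :=
      (hf₀.comp (measurable_const.prodMk measurable_id)) (measurableSet_singleton y)
    have hs2 : MeasurableSet ((fun u => fR (w, u)) ⁻¹' {r}) :=
      (hfR.comp (measurable_const.prodMk measurable_id)) (measurableSet_singleton r)
    have hCA : ∀ a : Fin 2,
        MeasurableSet ((fun u => if r = 1 then fA (w, y, u) else gA (w, u)) ⁻¹' {a}) := by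
      intro a
      rcases hr2 r with hr | hr <;> subst hr
      · rw [show (fun u => if (0 : Fin 2) = 1 then fA (w, y, u) else gA (w, u))
            = fun u => gA (w, u) from funext fun u => if_neg (by decide)]
        exact (hgA.comp (measurable_const.prodMk measurable_id)) (measurableSet_singleton a)
      · rw [show (fun u => if (1 : Fin 2) = 1 then fA (w, y, u) else gA (w, u))
            = fun u => fA (w, y, u) from funext fun u => if_pos rfl]
        exact (hfA.comp (measurable_const.prodMk (measurable_const.prodMk measurable_id)))
          (measurableSet_singleton a)
    have hμcell : ∀ a : Fin 2, μ {ω | W ω = w ∧ Y₀ ω = y ∧ R ω = r ∧ A ω = a}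
        = μ (W ⁻¹' {w}) * μ (U₀ ⁻¹' ((fun u => f₀ (w, u)) ⁻¹' {y})) * μ (UR ⁻¹' ((fun u => fR (w, u)) ⁻¹' {r}))
            * μ (UA ⁻¹' ((fun u => if r = 1 then fA (w, y, u) else gA (w, u)) ⁻¹' {a})) := by
      intro a
      rw [hcellEq w y r a]
      exact hmeas4 _ _ _ _ (measurableSet_singleton w) hs0 hs2 (hCA a)
    have hprodne : μ (W ⁻¹' {w}) * μ (U₀ ⁻¹' ((fun u => f₀ (w, u)) ⁻¹' {y})) * μ (UR ⁻¹' ((fun u => fR (w, u)) ⁻¹' {r})) ≠ 0 := by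
      intro h
      have := hpos w y r 1
      rw [hμcell 1, h, zero_mul] at this
      exact lt_irrefl _ this
    have hprodnetop : μ (W ⁻¹' {w}) * μ (U₀ ⁻¹' ((fun u => f₀ (w, u)) ⁻¹' {y})) * μ (UR ⁻¹' ((fun u => fR (w, u)) ⁻¹' {r})) ≠ ⊤ :=
      ENNReal.mul_ne_top (ENNReal.mul_ne_top (measure_ne_top μ _) (measure_ne_top μ _))
        (measure_ne_top μ _)
    have hqne : ∀ a : Fin 2, μ (UA ⁻¹' ((fun u => if r = 1 then fA (w, y, u) else gA (w, u)) ⁻¹' {(a : Fin 2)})) ≠ 0 := by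
      intro a h
      have := hpos w y r a
      rw [hμcell a, h, mul_zero] at this
      exact lt_irrefl _ this
    have hq01 : μ (UA ⁻¹' ((fun u => if r = 1 then fA (w, y, u) else gA (w, u)) ⁻¹' {(0 : Fin 2)})) + μ (UA ⁻¹' ((fun u => if r = 1 then fA (w, y, u) else gA (w, u)) ⁻¹' {(1 : Fin 2)})) = 1 := by
      have hdisj : Disjoint (UA ⁻¹' ((fun u => if r = 1 then fA (w, y, u) else gA (w, u)) ⁻¹' {(0 : Fin 2)})) (UA ⁻¹' ((fun u => if r = 1 then fA (w, y, u) else gA (w, u)) ⁻¹' {(1 : Fin 2)})) := by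
        rw [Set.disjoint_left]
        intro ω h0 h1
        simp only [Set.mem_preimage, Set.mem_singleton_iff] at h0 h1
        rw [h0] at h1
        exact absurd h1 (by decide)
      have hunion : (UA ⁻¹' ((fun u => if r = 1 then fA (w, y, u) else gA (w, u)) ⁻¹' {(0 : Fin 2)})) ∪ (UA ⁻¹' ((fun u => if r = 1 then fA (w, y, u) else gA (w, u)) ⁻¹' {(1 : Fin 2)})) = Set.univ := by
        ext ω
        simp only [Set.mem_union, Set.mem_preimage, Set.mem_singleton_iff, Set.mem_univ, iff_true]
        exact (hr2 _)
      have := measure_union (μ := μ) hdisj (hUA (hCA 1))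
      rw [hunion, measure_univ] at this
      exact this.symm
    have hq0R : (μ (UA ⁻¹' ((fun u => if r = 1 then fA (w, y, u) else gA (w, u)) ⁻¹' {(0 : Fin 2)}))).toReal = 1 - (μ (UA ⁻¹' ((fun u => if r = 1 then fA (w, y, u) else gA (w, u)) ⁻¹' {(1 : Fin 2)}))).toReal := by
      have := congrArg ENNReal.toReal hq01
      rw [ENNReal.toReal_add (measure_ne_top μ _) (measure_ne_top μ _), ENNReal.toReal_one] at this
      linarith
    have hp_pos : 0 < (μ (UA ⁻¹' ((fun u => if r = 1 then fA (w, y, u) else gA (w, u)) ⁻¹' {(1 : Fin 2)}))).toReal :=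
      ENNReal.toReal_pos (hqne 1) (measure_ne_top μ _)
    have hp_lt : (μ (UA ⁻¹' ((fun u => if r = 1 then fA (w, y, u) else gA (w, u)) ⁻¹' {(1 : Fin 2)}))).toReal < 1 := by
      have h0pos : 0 < (μ (UA ⁻¹' ((fun u => if r = 1 then fA (w, y, u) else gA (w, u)) ⁻¹' {(0 : Fin 2)}))).toReal :=
        ENNReal.toReal_pos (hqne 0) (measure_ne_top μ _)
      rw [hq0R] at h0pos
      linarith
    have hμcellR : ∀ a : Fin 2, (μ {ω | W ω = w ∧ Y₀ ω = y ∧ R ω = r ∧ A ω = a}).toReal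
        = (μ (W ⁻¹' {w}) * μ (U₀ ⁻¹' ((fun u => f₀ (w, u)) ⁻¹' {y})) * μ (UR ⁻¹' ((fun u => fR (w, u)) ⁻¹' {r}))).toReal
            * (μ (UA ⁻¹' ((fun u => if r = 1 then fA (w, y, u) else gA (w, u)) ⁻¹' {a}))).toReal := by
      intro a
      rw [hμcell a, ENNReal.toReal_mul]
    have hmh : ∀ a' : Fin 2,
        Measurable (fun u => if r = 1 then fY (w, y, a', u) else gY (w, a', u)) := by
      intro a'
      rcases hr2 r with hr | hr <;> subst hr
      · rw [show (fun u => if (0 : Fin 2) = 1 then fY (w, y, a', u) else gY (w, a', u))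
            = fun u => gY (w, a', u) from funext fun u => if_neg (by decide)]
        exact hgY.comp (measurable_const.prodMk (measurable_const.prodMk measurable_id))
      · rw [show (fun u => if (1 : Fin 2) = 1 then fY (w, y, a', u) else gY (w, a', u))
            = fun u => fY (w, y, a', u) from funext fun u => if_pos rfl]
        exact hfY.comp (measurable_const.prodMk (measurable_const.prodMk
          (measurable_const.prodMk measurable_id)))
    have hMcell : ∀ a a' : Fin 2,
        ∫ ω in {ω | W ω = w ∧ Y₀ ω = y ∧ R ω = r ∧ A ω = a},
            (if r = 1 then fY (w, y, a', UY ω) else gY (w, a', UY ω)) ∂μ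
          = (μ {ω | W ω = w ∧ Y₀ ω = y ∧ R ω = r ∧ A ω = a}).toReal
              * ∫ ω, (if r = 1 then fY (w, y, a', UY ω) else gY (w, a', UY ω)) ∂μ := by
      intro a a'
      rw [hcellEq w y r a]
      exact hintUY _ _ _ _ (measurableSet_singleton w) hs0 hs2 (hCA a)
        (fun u => if r = 1 then fY (w, y, a', u) else gY (w, a', u)) (hmh a')
    have hYint : ∀ a : Fin 2,
        ∫ ω in {ω | W ω = w ∧ Y₀ ω = y ∧ R ω = r ∧ A ω = a}, Y₁ ω ∂μ
          = (μ {ω | W ω = w ∧ Y₀ ω = y ∧ R ω = r ∧ A ω = a}).toReal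
              * ∫ ω, (if r = 1 then fY (w, y, a, UY ω) else gY (w, a, UY ω)) ∂μ := by
      intro a
      rw [← hMcell a a]
      refine setIntegral_congr_fun (hmcell w y r a) ?_
      rintro ω ⟨e1, e2, e3, e4⟩
      rw [hY₁ ω, e1, e2, e3, e4]
    have hYnint : ∀ a a' : Fin 2,
        ∫ ω in {ω | W ω = w ∧ Y₀ ω = y ∧ R ω = r ∧ A ω = a}, Ynat a' ω ∂μ
          = (μ {ω | W ω = w ∧ Y₀ ω = y ∧ R ω = r ∧ A ω = a}).toReal
              * ∫ ω, (if r = 1 then fY (w, y, a', UY ω) else gY (w, a', UY ω)) ∂μ := by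
      intro a a'
      rw [← hMcell a a']
      refine setIntegral_congr_fun (hmcell w y r a) ?_
      rintro ω ⟨e1, e2, e3, e4⟩
      rw [hYnat a' ω, e1, e2, e3]
    have hπ : (if r = 1 then π1 w y else π0 w) = (μ (UA ⁻¹' ((fun u => if r = 1 then fA (w, y, u) else gA (w, u)) ⁻¹' {(1 : Fin 2)}))).toReal := by
      have hcancel : ∀ (a b : ENNReal), a ≠ 0 → a ≠ ⊤ → a * b / a = b := by
        intro a b h0 ht
        rw [mul_comm, mul_div_assoc, ENNReal.div_self h0 ht, mul_one]
      rcases hr2 r with hr | hr <;> subst hr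
      · -- r = 0, use π0
        rw [if_neg (by decide), hπ0 w]
        rw [show (fun u => if (0 : Fin 2) = 1 then fA (w, y, u) else gA (w, u))
            = fun u => gA (w, u) from funext fun u => if_neg (by decide)] at *
        have hgA1 : MeasurableSet ((fun u => gA (w, u)) ⁻¹' {(1 : Fin 2)}) :=
          (hgA.comp (measurable_const.prodMk measurable_id)) (measurableSet_singleton 1)
        have hE0 : {ω | W ω = w ∧ R ω = (0 : Fin 2)}
            = W ⁻¹' {w} ∩ U₀ ⁻¹' Set.univ ∩ UR ⁻¹' ((fun u => fR (w, u)) ⁻¹' {(0 : Fin 2)})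
                ∩ UA ⁻¹' Set.univ := by
          ext ω
          simp only [Set.mem_setOf_eq, Set.mem_inter_iff, Set.mem_preimage,
            Set.mem_singleton_iff, Set.mem_univ]
          constructor
          · rintro ⟨h1, h3⟩
            refine ⟨⟨⟨h1, trivial⟩, ?_⟩, trivial⟩
            rw [← h1, ← hR ω]; exact h3
          · rintro ⟨⟨⟨h1, -⟩, h3⟩, -⟩
            exact ⟨h1, by rw [hR ω, h1]; exact h3⟩
        have hμE0 : μ {ω | W ω = w ∧ R ω = (0 : Fin 2)}
            = μ (W ⁻¹' {w}) * μ (UR ⁻¹' ((fun u => fR (w, u)) ⁻¹' {(0 : Fin 2)})) := by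
          rw [hE0, hmeas4 _ _ _ _ (measurableSet_singleton w) MeasurableSet.univ hs2
            MeasurableSet.univ]
          simp [measure_univ]
        have hA1E0 : {ω | A ω = 1} ∩ {ω | W ω = w ∧ R ω = (0 : Fin 2)}
            = W ⁻¹' {w} ∩ U₀ ⁻¹' Set.univ ∩ UR ⁻¹' ((fun u => fR (w, u)) ⁻¹' {(0 : Fin 2)})
                ∩ UA ⁻¹' ((fun u => gA (w, u)) ⁻¹' {(1 : Fin 2)}) := by
          ext ω
          simp only [Set.mem_inter_iff, Set.mem_setOf_eq, Set.mem_preimage,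
            Set.mem_singleton_iff, Set.mem_univ]
          constructor
          · rintro ⟨h4, h1, h3⟩
            refine ⟨⟨⟨h1, trivial⟩, by rw [← h1, ← hR ω]; exact h3⟩, ?_⟩
            rw [hA ω, h3, if_neg (by decide), h1] at h4
            exact h4
          · rintro ⟨⟨⟨h1, -⟩, h3⟩, h4⟩
            have hr0 : R ω = 0 := by rw [hR ω, h1]; exact h3
            refine ⟨?_, h1, hr0⟩
            rw [hA ω, hr0, if_neg (by decide), h1]
            exact h4
        have hμA1E0 : μ ({ω | A ω = 1} ∩ {ω | W ω = w ∧ R ω = (0 : Fin 2)})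
            = μ (W ⁻¹' {w}) * μ (UR ⁻¹' ((fun u => fR (w, u)) ⁻¹' {(0 : Fin 2)}))
                * μ (UA ⁻¹' ((fun u => gA (w, u)) ⁻¹' {(1 : Fin 2)})) := by
          rw [hA1E0, hmeas4 _ _ _ _ (measurableSet_singleton w) MeasurableSet.univ hs2 hgA1]
          simp [measure_univ]
        have hWR0ne : μ (W ⁻¹' {w}) * μ (UR ⁻¹' ((fun u => fR (w, u)) ⁻¹' {(0 : Fin 2)})) ≠ 0 := by
          intro h
          apply hprodne
          rcases mul_eq_zero.mp h with h' | h'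
          · rw [h', zero_mul, zero_mul]
          · rw [h', mul_zero]
        have hWR0fin : μ (W ⁻¹' {w}) * μ (UR ⁻¹' ((fun u => fR (w, u)) ⁻¹' {(0 : Fin 2)})) ≠ ⊤ :=
          ENNReal.mul_ne_top (measure_ne_top μ _) (measure_ne_top μ _)
        unfold cprob
        rw [hμA1E0, hμE0]
        congr 1
        exact hcancel _ _ hWR0ne hWR0fin
      · -- r = 1, use π1
        rw [if_pos rfl, hπ1 w y]
        have hE1 : {ω | W ω = w ∧ Y₀ ω = y ∧ R ω = (1 : Fin 2)}
            = {ω | W ω = w ∧ Y₀ ω = y ∧ R ω = (1 : Fin 2) ∧ A ω = (0 : Fin 2)}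
              ∪ {ω | W ω = w ∧ Y₀ ω = y ∧ R ω = (1 : Fin 2) ∧ A ω = (1 : Fin 2)} := by
          ext ω
          simp only [Set.mem_setOf_eq, Set.mem_union]
          constructor
          · rintro ⟨h1, h2, h3⟩
            rcases hr2 (A ω) with h4 | h4
            · exact Or.inl ⟨h1, h2, h3, h4⟩
            · exact Or.inr ⟨h1, h2, h3, h4⟩
          · rintro (⟨h1, h2, h3, -⟩ | ⟨h1, h2, h3, -⟩) <;> exact ⟨h1, h2, h3⟩
        have hdisj2 : Disjoint {ω | W ω = w ∧ Y₀ ω = y ∧ R ω = (1 : Fin 2) ∧ A ω = (0 : Fin 2)}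
            {ω | W ω = w ∧ Y₀ ω = y ∧ R ω = (1 : Fin 2) ∧ A ω = (1 : Fin 2)} := by
          rw [Set.disjoint_left]
          rintro ω ⟨-, -, -, h4⟩ ⟨-, -, -, h4'⟩
          rw [h4] at h4'
          exact absurd h4' (by decide)
        have hμE1 : μ {ω | W ω = w ∧ Y₀ ω = y ∧ R ω = (1 : Fin 2)}
            = μ (W ⁻¹' {w}) * μ (U₀ ⁻¹' ((fun u => f₀ (w, u)) ⁻¹' {y}))
                * μ (UR ⁻¹' ((fun u => fR (w, u)) ⁻¹' {(1 : Fin 2)})) := by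
          rw [hE1, measure_union hdisj2 (hmcell w y 1 1), hμcell 0, hμcell 1, ← mul_add,
            hq01, mul_one]
        have hA1E1 : {ω | A ω = 1} ∩ {ω | W ω = w ∧ Y₀ ω = y ∧ R ω = (1 : Fin 2)}
            = {ω | W ω = w ∧ Y₀ ω = y ∧ R ω = (1 : Fin 2) ∧ A ω = (1 : Fin 2)} := by
          ext ω
          simp only [Set.mem_inter_iff, Set.mem_setOf_eq]
          constructor
          · rintro ⟨h4, h1, h2, h3⟩
            exact ⟨h1, h2, h3, h4⟩
          · rintro ⟨h1, h2, h3, h4⟩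
            exact ⟨h4, h1, h2, h3⟩
        unfold cprob
        rw [hA1E1, hμcell 1, hμE1]
        congr 1
        exact hcancel _ _ hprodne hprodnetop
    refine ⟨(μ (W ⁻¹' {w}) * μ (U₀ ⁻¹' ((fun u => f₀ (w, u)) ⁻¹' {y})) * μ (UR ⁻¹' ((fun u => fR (w, u)) ⁻¹' {r}))).toReal, (μ (UA ⁻¹' ((fun u => if r = 1 then fA (w, y, u) else gA (w, u)) ⁻¹' {(1 : Fin 2)}))).toReal,
      ∫ ω, (if r = 1 then fY (w, y, (0 : Fin 2), UY ω) else gY (w, (0 : Fin 2), UY ω)) ∂μ,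
      ∫ ω, (if r = 1 then fY (w, y, (1 : Fin 2), UY ω) else gY (w, (1 : Fin 2), UY ω)) ∂μ,
      hp_pos, hp_lt, ?_, ?_, ?_, ?_⟩
    · rw [hμcellR 0, hq0R]
    · rw [hμcellR 1]
    · intro a
      have hptF : ∀ ω ∈ {ω | W ω = w ∧ Y₀ ω = y ∧ R ω = r ∧ A ω = a},
          (((if R ω = 1 then Qt1 (W ω) (Y₀ ω) 1 else Qt0 (W ω) 1)
              - (if R ω = 1 then Qt1 (W ω) (Y₀ ω) 0 else Qt0 (W ω) 0))
            + (((A ω : ℕ) : ℝ) - (if R ω = 1 then π1 (W ω) (Y₀ ω) else π0 (W ω)))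
                / ((if R ω = 1 then π1 (W ω) (Y₀ ω) else π0 (W ω))
                    * (1 - (if R ω = 1 then π1 (W ω) (Y₀ ω) else π0 (W ω))))
                * (Y₁ ω - (if R ω = 1 then Qt1 (W ω) (Y₀ ω) (A ω) else Qt0 (W ω) (A ω))))
          = (((if r = 1 then Qt1 w y 1 else Qt0 w 1) - (if r = 1 then Qt1 w y 0 else Qt0 w 0))
              - (((a : ℕ) : ℝ) - (μ (UA ⁻¹' ((fun u => if r = 1 then fA (w, y, u) else gA (w, u)) ⁻¹' {(1 : Fin 2)}))).toReal)
                / ((μ (UA ⁻¹' ((fun u => if r = 1 then fA (w, y, u) else gA (w, u)) ⁻¹' {(1 : Fin 2)}))).toReal * (1 - (μ (UA ⁻¹' ((fun u => if r = 1 then fA (w, y, u) else gA (w, u)) ⁻¹' {(1 : Fin 2)}))).toReal))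
                * (if r = 1 then Qt1 w y a else Qt0 w a))
            + (((a : ℕ) : ℝ) - (μ (UA ⁻¹' ((fun u => if r = 1 then fA (w, y, u) else gA (w, u)) ⁻¹' {(1 : Fin 2)}))).toReal)
                / ((μ (UA ⁻¹' ((fun u => if r = 1 then fA (w, y, u) else gA (w, u)) ⁻¹' {(1 : Fin 2)}))).toReal * (1 - (μ (UA ⁻¹' ((fun u => if r = 1 then fA (w, y, u) else gA (w, u)) ⁻¹' {(1 : Fin 2)}))).toReal)) * Y₁ ω := by
        rintro ω ⟨e1, e2, e3, e4⟩
        rw [e1, e2, e3, e4, hπ]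
        ring
      rw [setIntegral_congr_fun (hmcell w y r a) hptF]
      rw [integral_add (integrable_const _) ((hIntY₁.restrict).const_mul _)]
      rw [setIntegral_const, integral_const_mul, hYint a, smul_eq_mul]
      simp only [Measure.real]
      rcases hr2 a with ha | ha <;> subst ha
      · rw [if_neg (show ¬((0:Fin 2) = 1) by decide)]
        ring
      · rw [if_pos rfl]
        ring
    · intro a a'
      rw [hYnint a a']
      rcases hr2 a' with ha | ha <;> subst ha
      · rw [if_neg (show ¬((0:Fin 2) = 1) by decide)]
      · rw [if_pos rfl]
  -- integrability of the AIPW integrand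
  have hIntF : Integrable (fun ω =>
      (((if R ω = 1 then Qt1 (W ω) (Y₀ ω) 1 else Qt0 (W ω) 1)
              - (if R ω = 1 then Qt1 (W ω) (Y₀ ω) 0 else Qt0 (W ω) 0))
            + (((A ω : ℕ) : ℝ) - (if R ω = 1 then π1 (W ω) (Y₀ ω) else π0 (W ω)))
                / ((if R ω = 1 then π1 (W ω) (Y₀ ω) else π0 (W ω))
                    * (1 - (if R ω = 1 then π1 (W ω) (Y₀ ω) else π0 (W ω))))
                * (Y₁ ω - (if R ω = 1 then Qt1 (W ω) (Y₀ ω) (A ω) else Qt0 (W ω) (A ω))))) μ := by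
    have hmG : Measurable (fun ω => (W ω, Y₀ ω, R ω, A ω)) :=
      hW.prodMk (hmY₀.prodMk (hmR.prodMk hmA))
    have hBdd : ∀ φ : 𝒲 × 𝒴₀ × Fin 2 × Fin 2 → ℝ,
        ∃ C, ∀ ω : Ω, ‖φ (W ω, Y₀ ω, R ω, A ω)‖ ≤ C := fun φ =>
      ⟨∑ z : 𝒲 × 𝒴₀ × Fin 2 × Fin 2, ‖φ z‖, fun ω =>
        Finset.single_le_sum (f := fun z => ‖φ z‖) (fun z _ => norm_nonneg (φ z))
          (Finset.mem_univ _)⟩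
    have hIntSimple : ∀ φ : 𝒲 × 𝒴₀ × Fin 2 × Fin 2 → ℝ,
        Integrable (fun ω => φ (W ω, Y₀ ω, R ω, A ω)) μ := by
      intro φ
      obtain ⟨C, hC⟩ := hBdd φ
      exact Integrable.mono' (integrable_const C)
        ((measurable_of_countable φ).comp hmG).aestronglyMeasurable
        (Filter.Eventually.of_forall hC)
    have h1 := hIntSimple (fun c : 𝒲 × 𝒴₀ × Fin 2 × Fin 2 =>
        ((if c.2.2.1 = 1 then Qt1 c.1 c.2.1 1 else Qt0 c.1 1)
          - (if c.2.2.1 = 1 then Qt1 c.1 c.2.1 0 else Qt0 c.1 0))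
        - (((c.2.2.2 : ℕ) : ℝ) - (if c.2.2.1 = 1 then π1 c.1 c.2.1 else π0 c.1))
            / ((if c.2.2.1 = 1 then π1 c.1 c.2.1 else π0 c.1)
                * (1 - (if c.2.2.1 = 1 then π1 c.1 c.2.1 else π0 c.1)))
            * (if c.2.2.1 = 1 then Qt1 c.1 c.2.1 c.2.2.2 else Qt0 c.1 c.2.2.2))
    have h2 : Integrable (fun ω => (fun c : 𝒲 × 𝒴₀ × Fin 2 × Fin 2 =>
        (((c.2.2.2 : ℕ) : ℝ) - (if c.2.2.1 = 1 then π1 c.1 c.2.1 else π0 c.1))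
            / ((if c.2.2.1 = 1 then π1 c.1 c.2.1 else π0 c.1)
                * (1 - (if c.2.2.1 = 1 then π1 c.1 c.2.1 else π0 c.1))))
        (W ω, Y₀ ω, R ω, A ω) * Y₁ ω) μ := by
      have hm : AEStronglyMeasurable (fun ω => (fun c : 𝒲 × 𝒴₀ × Fin 2 × Fin 2 =>
          (((c.2.2.2 : ℕ) : ℝ) - (if c.2.2.1 = 1 then π1 c.1 c.2.1 else π0 c.1))
              / ((if c.2.2.1 = 1 then π1 c.1 c.2.1 else π0 c.1)
                  * (1 - (if c.2.2.1 = 1 then π1 c.1 c.2.1 else π0 c.1))))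
          (W ω, Y₀ ω, R ω, A ω)) μ :=
        ((measurable_of_countable (fun c : 𝒲 × 𝒴₀ × Fin 2 × Fin 2 =>
          (((c.2.2.2 : ℕ) : ℝ) - (if c.2.2.1 = 1 then π1 c.1 c.2.1 else π0 c.1))
              / ((if c.2.2.1 = 1 then π1 c.1 c.2.1 else π0 c.1)
                  * (1 - (if c.2.2.1 = 1 then π1 c.1 c.2.1 else π0 c.1))))).comp hmG).aestronglyMeasurable
      exact (hBdd (fun c : 𝒲 × 𝒴₀ × Fin 2 × Fin 2 =>
          (((c.2.2.2 : ℕ) : ℝ) - (if c.2.2.1 = 1 then π1 c.1 c.2.1 else π0 c.1))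
              / ((if c.2.2.1 = 1 then π1 c.1 c.2.1 else π0 c.1)
                  * (1 - (if c.2.2.1 = 1 then π1 c.1 c.2.1 else π0 c.1))))).elim fun C hC =>
          Integrable.bdd_mul hIntY₁ hm (Filter.Eventually.of_forall hC)
    refine (h1.add h2).congr (Filter.Eventually.of_forall fun ω => ?_)
    simp only [Pi.add_apply]
    ring
  -- decomposition of an integral over the cells
  have hdecomp : ∀ f : Ω → ℝ, Integrable f μ →
      ∫ ω, f ω ∂μ = ∑ c : 𝒲 × 𝒴₀ × Fin 2 × Fin 2,
        ∫ ω in {ω | W ω = c.1 ∧ Y₀ ω = c.2.1 ∧ R ω = c.2.2.1 ∧ A ω = c.2.2.2}, f ω ∂μ := by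
    intro f hf
    have hpt : ∀ ω, ∑ c : 𝒲 × 𝒴₀ × Fin 2 × Fin 2,
        Set.indicator {ω' | W ω' = c.1 ∧ Y₀ ω' = c.2.1 ∧ R ω' = c.2.2.1 ∧ A ω' = c.2.2.2} f ω
          = f ω := by
      intro ω
      rw [Finset.sum_eq_single (W ω, Y₀ ω, R ω, A ω)]
      · exact Set.indicator_of_mem (by exact ⟨rfl, rfl, rfl, rfl⟩) f
      · rintro ⟨w, y, r, a⟩ _ hc
        refine Set.indicator_of_notMem (fun hmem => hc ?_) f
        obtain ⟨h1, h2, h3, h4⟩ := hmem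
        simp only [Prod.mk.injEq]
        exact ⟨h1.symm, h2.symm, h3.symm, h4.symm⟩
      · intro h; exact absurd (Finset.mem_univ _) h
    have heq : ∫ ω, f ω ∂μ = ∫ ω, (∑ c : 𝒲 × 𝒴₀ × Fin 2 × Fin 2,
        Set.indicator {ω' | W ω' = c.1 ∧ Y₀ ω' = c.2.1 ∧ R ω' = c.2.2.1 ∧ A ω' = c.2.2.2} f ω) ∂μ :=
      integral_congr_ae (Filter.Eventually.of_forall fun ω => (hpt ω).symm)
    rw [heq, integral_finset_sum _ (fun c _ => hf.indicator (hmcell c.1 c.2.1 c.2.2.1 c.2.2.2))]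
    exact Finset.sum_congr rfl fun c _ => integral_indicator (hmcell _ _ _ _)
  rw [hdecomp _ hIntF, hdecomp _ hIntN1, hdecomp _ hIntN0, ← Finset.sum_sub_distrib]
  rw [Fintype.sum_prod_type, Fintype.sum_prod_type]
  refine Finset.sum_congr rfl fun w _ => ?_
  rw [Fintype.sum_prod_type, Fintype.sum_prod_type]
  refine Finset.sum_congr rfl fun y _ => ?_
  rw [Fintype.sum_prod_type, Fintype.sum_prod_type]
  refine Finset.sum_congr rfl fun r _ => ?_
  obtain ⟨N, p, m0, m1, hp0, hp1, hμ0, hμ1, hF, hYn⟩ := hkey w y r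
  rw [Fin.sum_univ_two, Fin.sum_univ_two]
  simp only []
  rw [hF 0, hF 1, hYn 0 1, hYn 0 0, hYn 1 1, hYn 1 0, hμ0, hμ1]
  have hp0' : p ≠ 0 := ne_of_gt hp0
  have hp1' : 1 - p ≠ 0 := by intro h; nlinarith
  simp only [Fin.isValue, show ((0 : Fin 2) = 1) = False by simp, if_false, if_true,
    show (((0 : Fin 2) : ℕ) : ℝ) = 0 by norm_num, show (((1 : Fin 2) : ℕ) : ℝ) = 1 by norm_num]
  field_simp
  ring
end

section
/- In the discrete lm-SCM for the motivating example (Figure 1c), under Positivity, the context-parameterized AIPW score is robust to misspecification of the propensity model: for arbitrary functions π̃₁ : 𝒲 × 𝒴₀ → ℝ and π̃₀ : 𝒲 → ℝ taking values strictly between 0 and 1, with the true outcome regressions of the Nuisance functions, E[ (Q_R(1) − Q_R(0)) + (A − π̃_R) / (π̃_R (1 − π̃_R)) · (Y₁ − Q_R(A)) ] = θ, where pointwise on Ω, Q_R(a) := if R = 1 then Q₁(W, Y₀, a) else Q₀(W, a), and π̃_R := if R = 1 then π̃₁(W, Y₀) else π̃₀(W). -/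
open MeasureTheory ProbabilityTheory

lemma aux_key {Ω 𝒰Y : Type*} [MeasurableSpace Ω] [MeasurableSpace 𝒰Y]
    (μ : Measure Ω) [IsProbabilityMeasure μ] (mv : Fin 5 → MeasurableSpace Ω)
    (h_le : ∀ i, mv i ≤ ‹MeasurableSpace Ω›)
    (UY : Ω → 𝒰Y) (hUY : Measurable UY)
    (hmv4 : mv 4 = MeasurableSpace.comap UY inferInstance)
    (hIndep : iIndep mv μ)
    (E : Set Ω) (hE : MeasurableSet[⨆ i ∈ ({0,1,2,3} : Set (Fin 5)), mv i] E)
    (h : 𝒰Y → ℝ) (hh : Measurable h) :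
    ∫ ω, E.indicator (fun ω => h (UY ω)) ω ∂μ = (μ E).toReal * ∫ ω, h (UY ω) ∂μ := by
  have hMsup_le : (⨆ i ∈ ({0,1,2,3} : Set (Fin 5)), mv i) ≤ ‹MeasurableSpace Ω› :=
    iSup₂_le fun i _ => h_le i
  have hEamb : MeasurableSet E := hMsup_le E hE
  have hXm : Measurable (E.indicator (fun _ => (1:ℝ))) := measurable_const.indicator hEamb
  have hXM : Measurable[⨆ i ∈ ({0,1,2,3} : Set (Fin 5)), mv i] (E.indicator (fun _ => (1:ℝ))) :=
    (@measurable_const ℝ Ω _ _ 1).indicator hE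
  have hdisj : Disjoint ({0,1,2,3} : Set (Fin 5)) {4} := by
    rw [Set.disjoint_left]
    rintro a (rfl | rfl | rfl | rfl) <;> simp
  have hIndepSup : Indep (⨆ i ∈ ({0,1,2,3} : Set (Fin 5)), mv i) (mv 4) μ := by
    have h := indep_iSup_of_disjoint h_le hIndep hdisj
    exact indep_of_indep_of_le_right h (le_biSup mv (by simp : (4 : Fin 5) ∈ ({4} : Set (Fin 5))))
  have hcomap2 : MeasurableSpace.comap (fun ω => h (UY ω)) inferInstance ≤ mv 4 := by
    have heq : (fun ω => h (UY ω)) = h ∘ UY := rfl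
    rw [heq, ← MeasurableSpace.comap_comp, hmv4]
    exact MeasurableSpace.comap_mono hh.comap_le
  have hIF : IndepFun (E.indicator (fun _ => (1:ℝ))) (fun ω => h (UY ω)) μ := by
    rw [IndepFun_iff_Indep]
    exact indep_of_indep_of_le_left (indep_of_indep_of_le_right hIndepSup hcomap2) hXM.comap_le
  have hmul := hIF.integral_mul_eq_mul_integral hXm.aestronglyMeasurable ((hh.comp hUY).aestronglyMeasurable)
  have hfun : E.indicator (fun ω => h (UY ω))
      = (E.indicator fun _ => (1:ℝ)) * fun ω => h (UY ω) := by
    funext ω; by_cases hω : ω ∈ E <;> simp [Set.indicator_apply, hω]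
  rw [hfun, hmul, integral_indicator_const (1:ℝ) hEamb, measureReal_def, smul_eq_mul, mul_one]

/-- In the discrete lm-SCM of Figure 1c, under positivity, the context-parameterized AIPW score is robust to misspecification of the propensity model. -/
theorem lmSCM_aipw_robust_propensity_misspecification
    {Ω 𝒲 𝒴₀ 𝒰₀ 𝒰R 𝒰A 𝒰Y : Type*}
    [MeasurableSpace Ω]
    [Fintype 𝒲] [Nonempty 𝒲] [MeasurableSpace 𝒲] [MeasurableSingletonClass 𝒲]
    [Fintype 𝒴₀] [Nonempty 𝒴₀] [MeasurableSpace 𝒴₀] [MeasurableSingletonClass 𝒴₀]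
    [MeasurableSpace 𝒰₀] [MeasurableSpace 𝒰R] [MeasurableSpace 𝒰A] [MeasurableSpace 𝒰Y]
    (μ : Measure Ω) [IsProbabilityMeasure μ]
    (W : Ω → 𝒲) (U₀ : Ω → 𝒰₀) (UR : Ω → 𝒰R) (UA : Ω → 𝒰A) (UY : Ω → 𝒰Y)
    (hW : Measurable W) (hU₀ : Measurable U₀) (hUR : Measurable UR)
    (hUA : Measurable UA) (hUY : Measurable UY)
    (hIndep : iIndep
      (![MeasurableSpace.comap W inferInstance, MeasurableSpace.comap U₀ inferInstance,
         MeasurableSpace.comap UR inferInstance, MeasurableSpace.comap UA inferInstance,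
         MeasurableSpace.comap UY inferInstance] : Fin 5 → MeasurableSpace Ω) μ)
    (f₀ : 𝒲 × 𝒰₀ → 𝒴₀) (hf₀ : Measurable f₀)
    (fR : 𝒲 × 𝒰R → Fin 2) (hfR : Measurable fR)
    (fA : 𝒲 × 𝒴₀ × 𝒰A → Fin 2) (hfA : Measurable fA)
    (gA : 𝒲 × 𝒰A → Fin 2) (hgA : Measurable gA)
    (fY : 𝒲 × 𝒴₀ × Fin 2 × 𝒰Y → ℝ) (hfY : Measurable fY)
    (gY : 𝒲 × Fin 2 × 𝒰Y → ℝ) (hgY : Measurable gY)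
    (Y₀ : Ω → 𝒴₀) (R A : Ω → Fin 2) (Y₁ : Ω → ℝ)
    (hY₀ : ∀ ω, Y₀ ω = f₀ (W ω, U₀ ω))
    (hR : ∀ ω, R ω = fR (W ω, UR ω))
    (hA : ∀ ω, A ω = if R ω = 1 then fA (W ω, Y₀ ω, UA ω) else gA (W ω, UA ω))
    (hY₁ : ∀ ω, Y₁ ω = if R ω = 1 then fY (W ω, Y₀ ω, A ω, UY ω) else gY (W ω, A ω, UY ω))
    (Ynat : Fin 2 → Ω → ℝ)
    (hYnat : ∀ (a : Fin 2) (ω : Ω),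
      Ynat a ω = if R ω = 1 then fY (W ω, Y₀ ω, a, UY ω) else gY (W ω, a, UY ω))
    (Yful : Fin 2 → Ω → ℝ)
    (hYful : ∀ (a : Fin 2) (ω : Ω), Yful a ω = fY (W ω, Y₀ ω, a, UY ω))
    (hIntY₁ : Integrable Y₁ μ)
    (hIntN0 : Integrable (Ynat 0) μ) (hIntN1 : Integrable (Ynat 1) μ)
    (hIntF0 : Integrable (Yful 0) μ) (hIntF1 : Integrable (Yful 1) μ)
    (hpos : ∀ (w : 𝒲) (y : 𝒴₀) (r a : Fin 2),
      0 < μ {ω | W ω = w ∧ Y₀ ω = y ∧ R ω = r ∧ A ω = a})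
    (Q1 : 𝒲 → 𝒴₀ → Fin 2 → ℝ)
    (hQ1 : ∀ (w : 𝒲) (y : 𝒴₀) (a : Fin 2),
      Q1 w y a = cexp μ Y₁ {ω | W ω = w ∧ Y₀ ω = y ∧ A ω = a ∧ R ω = 1})
    (Q0 : 𝒲 → Fin 2 → ℝ)
    (hQ0 : ∀ (w : 𝒲) (a : Fin 2), Q0 w a = cexp μ Y₁ {ω | W ω = w ∧ A ω = a ∧ R ω = 0})
    :
    ∀ (πt1 : 𝒲 → 𝒴₀ → ℝ) (πt0 : 𝒲 → ℝ),
      (∀ (w : 𝒲) (y : 𝒴₀), 0 < πt1 w y ∧ πt1 w y < 1) →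
      (∀ w : 𝒲, 0 < πt0 w ∧ πt0 w < 1) →
      ∫ ω, (((if R ω = 1 then Q1 (W ω) (Y₀ ω) 1 else Q0 (W ω) 1)
              - (if R ω = 1 then Q1 (W ω) (Y₀ ω) 0 else Q0 (W ω) 0))
            + (((A ω : ℕ) : ℝ) - (if R ω = 1 then πt1 (W ω) (Y₀ ω) else πt0 (W ω)))
                / ((if R ω = 1 then πt1 (W ω) (Y₀ ω) else πt0 (W ω))
                    * (1 - (if R ω = 1 then πt1 (W ω) (Y₀ ω) else πt0 (W ω))))
                * (Y₁ ω - (if R ω = 1 then Q1 (W ω) (Y₀ ω) (A ω) else Q0 (W ω) (A ω)))) ∂μ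
        = (∫ ω, Ynat 1 ω ∂μ) - (∫ ω, Ynat 0 ω ∂μ) := by
  classical
  intro πt1 πt0 _ _
  have h_le : ∀ i, (![MeasurableSpace.comap W inferInstance, MeasurableSpace.comap U₀ inferInstance,
      MeasurableSpace.comap UR inferInstance, MeasurableSpace.comap UA inferInstance,
      MeasurableSpace.comap UY inferInstance] : Fin 5 → MeasurableSpace Ω) i
      ≤ ‹MeasurableSpace Ω› := by
    intro i
    fin_cases i
    · exact hW.comap_le
    · exact hU₀.comap_le
    · exact hUR.comap_le
    · exact hUA.comap_le
    · exact hUY.comap_le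
  have key : ∀ (E : Set Ω),
      MeasurableSet[⨆ i ∈ ({0,1,2,3} : Set (Fin 5)),
        (![MeasurableSpace.comap W inferInstance, MeasurableSpace.comap U₀ inferInstance,
          MeasurableSpace.comap UR inferInstance, MeasurableSpace.comap UA inferInstance,
          MeasurableSpace.comap UY inferInstance] : Fin 5 → MeasurableSpace Ω) i] E →
      ∀ (h : 𝒰Y → ℝ), Measurable h →
      ∫ ω, E.indicator (fun ω => h (UY ω)) ω ∂μ = (μ E).toReal * ∫ ω, h (UY ω) ∂μ :=
    fun E hE h hh => aux_key μ _ h_le UY hUY rfl hIndep E hE h hh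
  set C : 𝒲 → 𝒴₀ → Fin 2 → Fin 2 → Set Ω := fun w y r a =>
    W ⁻¹' {w} ∩ U₀ ⁻¹' {u | f₀ (w, u) = y} ∩ UR ⁻¹' {u | fR (w, u) = r} ∩
      UA ⁻¹' {u | (if r = 1 then fA (w, y, u) else gA (w, u)) = a} with hC
  have hmemC : ∀ w y r a ω, ω ∈ C w y r a ↔ (W ω = w ∧ Y₀ ω = y ∧ R ω = r ∧ A ω = a) := by
    intro w y r a ω
    simp only [hC, Set.mem_inter_iff, Set.mem_preimage, Set.mem_singleton_iff, Set.mem_setOf_eq]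
    constructor
    · rintro ⟨⟨⟨h1, h2⟩, h3⟩, h4⟩
      have hy : Y₀ ω = y := by rw [hY₀, h1]; exact h2
      have hr : R ω = r := by rw [hR, h1]; exact h3
      refine ⟨h1, hy, hr, ?_⟩
      rw [hA, h1, hy, hr]
      exact h4
    · rintro ⟨h1, h2, h3, h4⟩
      refine ⟨⟨⟨h1, ?_⟩, ?_⟩, ?_⟩
      · rw [← h1, ← hY₀]; exact h2
      · rw [← h1, ← hR]; exact h3
      · rw [← h1, ← h2, ← h3, ← hA]; exact h4
  have hCmeas : ∀ w y r a, MeasurableSet (C w y r a) := by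
    intro w y r a
    refine (((hW (measurableSet_singleton w)).inter
        (hU₀ ((hf₀.comp measurable_prodMk_left) (measurableSet_singleton y)))).inter
        (hUR ((hfR.comp measurable_prodMk_left) (measurableSet_singleton r)))).inter
        (hUA ?_)
    have hm : Measurable fun u : 𝒰A => (if r = 1 then fA (w, y, u) else gA (w, u)) := by
      split_ifs with h
      · exact hfA.comp (measurable_prodMk_left.comp measurable_prodMk_left)
      · exact hgA.comp measurable_prodMk_left
    exact hm (measurableSet_singleton a)
  have hCMsup : ∀ w y r a,
      MeasurableSet[⨆ i ∈ ({0,1,2,3} : Set (Fin 5)),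
        (![MeasurableSpace.comap W inferInstance, MeasurableSpace.comap U₀ inferInstance,
          MeasurableSpace.comap UR inferInstance, MeasurableSpace.comap UA inferInstance,
          MeasurableSpace.comap UY inferInstance] : Fin 5 → MeasurableSpace Ω) i] (C w y r a) := by
    intro w y r a
    set mvec := (![MeasurableSpace.comap W inferInstance, MeasurableSpace.comap U₀ inferInstance,
          MeasurableSpace.comap UR inferInstance, MeasurableSpace.comap UA inferInstance,
          MeasurableSpace.comap UY inferInstance] : Fin 5 → MeasurableSpace Ω)
    have l0 := le_biSup mvec (by simp : (0 : Fin 5) ∈ ({0,1,2,3} : Set (Fin 5)))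
    have l1 := le_biSup mvec (by simp : (1 : Fin 5) ∈ ({0,1,2,3} : Set (Fin 5)))
    have l2 := le_biSup mvec (by simp : (2 : Fin 5) ∈ ({0,1,2,3} : Set (Fin 5)))
    have l3 := le_biSup mvec (by simp : (3 : Fin 5) ∈ ({0,1,2,3} : Set (Fin 5)))
    exact (((l0 _ ⟨{w}, measurableSet_singleton w, rfl⟩).inter
        (l1 _ ⟨{u | f₀ (w, u) = y}, (hf₀.comp measurable_prodMk_left) (measurableSet_singleton y), rfl⟩)).inter
        (l2 _ ⟨{u | fR (w, u) = r}, (hfR.comp measurable_prodMk_left) (measurableSet_singleton r), rfl⟩)).inter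
        (l3 _ ⟨{u | (if r = 1 then fA (w, y, u) else gA (w, u)) = a}, by
          have hm : Measurable fun u : 𝒰A => (if r = 1 then fA (w, y, u) else gA (w, u)) := by
            split_ifs with h
            · exact hfA.comp (measurable_prodMk_left.comp measurable_prodMk_left)
            · exact hgA.comp measurable_prodMk_left
          exact hm (measurableSet_singleton a), rfl⟩)
  have hposC : ∀ w y r a, μ (C w y r a) ≠ 0 := by
    intro w y r a
    have h := hpos w y r a
    have hseteq : {ω | W ω = w ∧ Y₀ ω = y ∧ R ω = r ∧ A ω = a} = C w y r a :=
      Set.ext fun ω => (hmemC w y r a ω).symm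
    rw [hseteq] at h
    exact h.ne'
  have hY₁C : ∀ w y (r a : Fin 2), ∀ ω ∈ C w y r a,
      Y₁ ω = if r = 1 then fY (w, y, a, UY ω) else gY (w, a, UY ω) := by
    intro w y r a ω hω
    obtain ⟨h1, h2, h3, h4⟩ := (hmemC w y r a ω).1 hω
    rw [hY₁, h1, h2, h3, h4]
  have hYnatC : ∀ w y (r a b : Fin 2), ∀ ω ∈ C w y r a,
      Ynat b ω = if r = 1 then fY (w, y, b, UY ω) else gY (w, b, UY ω) := by
    intro w y r a b ω hω
    obtain ⟨h1, h2, h3, _⟩ := (hmemC w y r a ω).1 hω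
    rw [hYnat, h1, h2, h3]
  have hfYm : ∀ w y (b : Fin 2), Measurable fun u : 𝒰Y => fY (w, y, b, u) := fun w y b =>
    hfY.comp (measurable_prodMk_left.comp (measurable_prodMk_left.comp measurable_prodMk_left))
  have hgYm : ∀ w (b : Fin 2), Measurable fun u : 𝒰Y => gY (w, b, u) := fun w b =>
    hgY.comp (measurable_prodMk_left.comp measurable_prodMk_left)
  have hhm : ∀ w y (r b : Fin 2),
      Measurable fun u : 𝒰Y => (if r = 1 then fY (w, y, b, u) else gY (w, b, u)) := by
    intro w y r b
    split_ifs with h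
    · exact hfYm w y b
    · exact hgYm w b
  -- integral of an indicator of Y₁ over a cell
  have hintY₁C : ∀ w y (r a : Fin 2), ∫ ω, (C w y r a).indicator Y₁ ω ∂μ
      = (μ (C w y r a)).toReal *
        (if r = 1 then ∫ ω, fY (w, y, a, UY ω) ∂μ else ∫ ω, gY (w, a, UY ω) ∂μ) := by
    intro w y r a
    have hind : (C w y r a).indicator Y₁ = (C w y r a).indicator
        (fun ω => (fun u => if r = 1 then fY (w, y, a, u) else gY (w, a, u)) (UY ω)) := by
      funext ω; by_cases hω : ω ∈ C w y r a
      · rw [Set.indicator_of_mem hω, Set.indicator_of_mem hω]; exact hY₁C w y r a ω hω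
      · rw [Set.indicator_of_notMem hω, Set.indicator_of_notMem hω]
    rw [hind, key _ (hCMsup w y r a) _ (hhm w y r a)]
    split_ifs with h <;> rfl
  -- the true outcome regressions equal the independent means
  have hQ1m : ∀ w y (a : Fin 2), Q1 w y a = ∫ ω, fY (w, y, a, UY ω) ∂μ := by
    intro w y a
    have hset : {ω | W ω = w ∧ Y₀ ω = y ∧ A ω = a ∧ R ω = 1} = C w y 1 a := by
      ext ω; rw [hmemC]; simp only [Set.mem_setOf_eq]; tauto
    rw [hQ1, hset]
    unfold cexp
    rw [← integral_indicator (hCmeas w y 1 a), hintY₁C w y 1 a, if_pos rfl, ← mul_assoc,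
      inv_mul_cancel₀ (ENNReal.toReal_ne_zero.2 ⟨hposC w y 1 a, measure_ne_top μ _⟩), one_mul]
  have hQ0m : ∀ w (a : Fin 2), Q0 w a = ∫ ω, gY (w, a, UY ω) ∂μ := by
    intro w a
    set E0 : Set Ω := W ⁻¹' {w} ∩ UR ⁻¹' {u | fR (w, u) = 0} ∩ UA ⁻¹' {u | gA (w, u) = a}
      with hE0
    have hmemE0 : ∀ ω, ω ∈ E0 ↔ (W ω = w ∧ R ω = 0 ∧ A ω = a) := by
      intro ω
      simp only [hE0, Set.mem_inter_iff, Set.mem_preimage, Set.mem_singleton_iff,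
        Set.mem_setOf_eq]
      constructor
      · rintro ⟨⟨h1, h2⟩, h3⟩
        have hr : R ω = 0 := by rw [hR, h1]; exact h2
        refine ⟨h1, hr, ?_⟩
        rw [hA, h1, hr, if_neg (by decide : ¬ (0 : Fin 2) = 1)]
        exact h3
      · rintro ⟨h1, h2, h3⟩
        refine ⟨⟨h1, ?_⟩, ?_⟩
        · rw [← h1, ← hR]; exact h2
        · have h4 := hA ω
          rw [h2, if_neg (by decide : ¬ (0 : Fin 2) = 1), h1] at h4
          rw [← h4]; exact h3
    have hE0Msup : MeasurableSet[⨆ i ∈ ({0,1,2,3} : Set (Fin 5)),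
        (![MeasurableSpace.comap W inferInstance, MeasurableSpace.comap U₀ inferInstance,
          MeasurableSpace.comap UR inferInstance, MeasurableSpace.comap UA inferInstance,
          MeasurableSpace.comap UY inferInstance] : Fin 5 → MeasurableSpace Ω) i] E0 := by
      set mvec := (![MeasurableSpace.comap W inferInstance, MeasurableSpace.comap U₀ inferInstance,
          MeasurableSpace.comap UR inferInstance, MeasurableSpace.comap UA inferInstance,
          MeasurableSpace.comap UY inferInstance] : Fin 5 → MeasurableSpace Ω)
      have l0 := le_biSup mvec (by simp : (0 : Fin 5) ∈ ({0,1,2,3} : Set (Fin 5)))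
      have l2 := le_biSup mvec (by simp : (2 : Fin 5) ∈ ({0,1,2,3} : Set (Fin 5)))
      have l3 := le_biSup mvec (by simp : (3 : Fin 5) ∈ ({0,1,2,3} : Set (Fin 5)))
      exact ((l0 _ ⟨{w}, measurableSet_singleton w, rfl⟩).inter
        (l2 _ ⟨{u | fR (w, u) = 0},
          (hfR.comp measurable_prodMk_left) (measurableSet_singleton 0), rfl⟩)).inter
        (l3 _ ⟨{u | gA (w, u) = a},
          (hgA.comp measurable_prodMk_left) (measurableSet_singleton a), rfl⟩)
    have hE0meas : MeasurableSet E0 :=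
      ((hW (measurableSet_singleton w)).inter
        (hUR ((hfR.comp measurable_prodMk_left) (measurableSet_singleton 0)))).inter
        (hUA ((hgA.comp measurable_prodMk_left) (measurableSet_singleton a)))
    have hsub : C w (Classical.arbitrary 𝒴₀) 0 a ⊆ E0 := by
      intro ω hω
      obtain ⟨h1, h2, h3, h4⟩ := (hmemC _ _ _ _ ω).1 hω
      exact (hmemE0 ω).2 ⟨h1, h3, h4⟩
    have hμ0 : μ E0 ≠ 0 := by
      intro hzero
      exact hposC w (Classical.arbitrary 𝒴₀) 0 a
        (le_antisymm (le_trans (measure_mono hsub) hzero.le) zero_le)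
    have hind : E0.indicator Y₁ = E0.indicator (fun ω => (fun u => gY (w, a, u)) (UY ω)) := by
      funext ω; by_cases hω : ω ∈ E0
      · rw [Set.indicator_of_mem hω, Set.indicator_of_mem hω]
        obtain ⟨h1, h2, h3⟩ := (hmemE0 ω).1 hω
        rw [hY₁, h1, h2, h3, if_neg (by decide : ¬ (0 : Fin 2) = 1)]
      · rw [Set.indicator_of_notMem hω, Set.indicator_of_notMem hω]
    have hset : {ω | W ω = w ∧ A ω = a ∧ R ω = 0} = E0 := by
      ext ω; rw [Set.mem_setOf_eq, hmemE0 ω]; tauto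
    rw [hQ0, hset]
    unfold cexp
    rw [← integral_indicator hE0meas, hind, key _ hE0Msup _ (hgYm w a), ← mul_assoc,
      inv_mul_cancel₀ (ENNReal.toReal_ne_zero.2 ⟨hμ0, measure_ne_top μ _⟩), one_mul]
  set Hv : Fin 2 → 𝒲 → 𝒴₀ → Fin 2 → ℝ := fun r w y a =>
    (((a : ℕ) : ℝ) - (if r = 1 then πt1 w y else πt0 w)) /
      ((if r = 1 then πt1 w y else πt0 w) * (1 - (if r = 1 then πt1 w y else πt0 w))) with hHv
  set Qv : Fin 2 → 𝒲 → 𝒴₀ → Fin 2 → ℝ := fun r w y a =>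
    if r = 1 then Q1 w y a else Q0 w a with hQv
  set Mv : Fin 2 → 𝒲 → 𝒴₀ → Fin 2 → ℝ := fun r w y b =>
    if r = 1 then ∫ ω, fY (w, y, b, UY ω) ∂μ else ∫ ω, gY (w, b, UY ω) ∂μ with hMv
  have hQvMv : ∀ (r : Fin 2) w y (a : Fin 2), Qv r w y a = Mv r w y a := by
    intro r w y a
    simp only [hQv, hMv]
    split_ifs
    · exact hQ1m w y a
    · exact hQ0m w a
  have hFC : ∀ w y (r a : Fin 2), ∀ ω ∈ C w y r a,
      ((if R ω = 1 then Q1 (W ω) (Y₀ ω) 1 else Q0 (W ω) 1)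
          - (if R ω = 1 then Q1 (W ω) (Y₀ ω) 0 else Q0 (W ω) 0))
        + (((A ω : ℕ) : ℝ) - (if R ω = 1 then πt1 (W ω) (Y₀ ω) else πt0 (W ω)))
            / ((if R ω = 1 then πt1 (W ω) (Y₀ ω) else πt0 (W ω))
                * (1 - (if R ω = 1 then πt1 (W ω) (Y₀ ω) else πt0 (W ω))))
            * (Y₁ ω - (if R ω = 1 then Q1 (W ω) (Y₀ ω) (A ω) else Q0 (W ω) (A ω)))
      = ((Qv r w y 1 - Qv r w y 0) - Hv r w y a * Qv r w y a) + Hv r w y a * Y₁ ω := by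
    intro w y r a ω hω
    obtain ⟨h1, h2, h3, h4⟩ := (hmemC w y r a ω).1 hω
    rw [h1, h2, h3, h4]
    simp only [hHv, hQv]
    ring
  have hindF : ∀ w y (r a : Fin 2), (C w y r a).indicator (fun ω =>
        ((if R ω = 1 then Q1 (W ω) (Y₀ ω) 1 else Q0 (W ω) 1)
          - (if R ω = 1 then Q1 (W ω) (Y₀ ω) 0 else Q0 (W ω) 0))
        + (((A ω : ℕ) : ℝ) - (if R ω = 1 then πt1 (W ω) (Y₀ ω) else πt0 (W ω)))
            / ((if R ω = 1 then πt1 (W ω) (Y₀ ω) else πt0 (W ω))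
                * (1 - (if R ω = 1 then πt1 (W ω) (Y₀ ω) else πt0 (W ω))))
            * (Y₁ ω - (if R ω = 1 then Q1 (W ω) (Y₀ ω) (A ω) else Q0 (W ω) (A ω))))
      = fun ω => (C w y r a).indicator
          (fun _ => ((Qv r w y 1 - Qv r w y 0) - Hv r w y a * Qv r w y a)) ω
        + Hv r w y a * (C w y r a).indicator Y₁ ω := by
    intro w y r a
    funext ω
    by_cases hω : ω ∈ C w y r a
    · rw [Set.indicator_of_mem hω, Set.indicator_of_mem hω, Set.indicator_of_mem hω]
      exact hFC w y r a ω hω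
    · rw [Set.indicator_of_notMem hω, Set.indicator_of_notMem hω,
        Set.indicator_of_notMem hω]
      ring
  have hFint : ∀ z : 𝒲 × 𝒴₀ × Fin 2 × Fin 2,
      Integrable ((C z.1 z.2.1 z.2.2.1 z.2.2.2).indicator (fun ω =>
        ((if R ω = 1 then Q1 (W ω) (Y₀ ω) 1 else Q0 (W ω) 1)
          - (if R ω = 1 then Q1 (W ω) (Y₀ ω) 0 else Q0 (W ω) 0))
        + (((A ω : ℕ) : ℝ) - (if R ω = 1 then πt1 (W ω) (Y₀ ω) else πt0 (W ω)))
            / ((if R ω = 1 then πt1 (W ω) (Y₀ ω) else πt0 (W ω))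
                * (1 - (if R ω = 1 then πt1 (W ω) (Y₀ ω) else πt0 (W ω))))
            * (Y₁ ω - (if R ω = 1 then Q1 (W ω) (Y₀ ω) (A ω) else Q0 (W ω) (A ω))))) μ := by
    rintro ⟨w, y, r, a⟩
    rw [hindF w y r a]
    exact ((integrable_const _).indicator (hCmeas w y r a)).add
      ((hIntY₁.indicator (hCmeas w y r a)).const_mul _)
  have hcell : ∀ w y (r a : Fin 2),
      ∫ ω, (C w y r a).indicator (fun ω =>
        ((if R ω = 1 then Q1 (W ω) (Y₀ ω) 1 else Q0 (W ω) 1)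
          - (if R ω = 1 then Q1 (W ω) (Y₀ ω) 0 else Q0 (W ω) 0))
        + (((A ω : ℕ) : ℝ) - (if R ω = 1 then πt1 (W ω) (Y₀ ω) else πt0 (W ω)))
            / ((if R ω = 1 then πt1 (W ω) (Y₀ ω) else πt0 (W ω))
                * (1 - (if R ω = 1 then πt1 (W ω) (Y₀ ω) else πt0 (W ω))))
            * (Y₁ ω - (if R ω = 1 then Q1 (W ω) (Y₀ ω) (A ω) else Q0 (W ω) (A ω)))) ω ∂μ
      = (μ (C w y r a)).toReal * (Mv r w y 1 - Mv r w y 0) := by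
    intro w y r a
    rw [hindF w y r a,
      integral_add ((integrable_const _).indicator (hCmeas w y r a))
        ((hIntY₁.indicator (hCmeas w y r a)).const_mul _),
      integral_const_mul, integral_indicator_const _ (hCmeas w y r a), measureReal_def, hintY₁C w y r a,
      smul_eq_mul]
    have hMva : (if r = 1 then ∫ ω, fY (w, y, a, UY ω) ∂μ else ∫ ω, gY (w, a, UY ω) ∂μ)
        = Mv r w y a := by simp only [hMv]
    rw [hMva, hQvMv, hQvMv, hQvMv]
    ring
  have hpart : ∀ (f : Ω → ℝ) (ω : Ω),
      f ω = ∑ z : 𝒲 × 𝒴₀ × Fin 2 × Fin 2, (C z.1 z.2.1 z.2.2.1 z.2.2.2).indicator f ω := by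
    intro f ω
    have h0 : ∀ z ∈ (Finset.univ : Finset (𝒲 × 𝒴₀ × Fin 2 × Fin 2)),
        z ≠ (W ω, Y₀ ω, R ω, A ω) → (C z.1 z.2.1 z.2.2.1 z.2.2.2).indicator f ω = 0 := by
      rintro ⟨zw, zy, zr, za⟩ _ hz
      apply Set.indicator_of_notMem
      intro hmem
      obtain ⟨h1, h2, h3, h4⟩ := (hmemC _ _ _ _ ω).1 hmem
      exact hz (by rw [h1, h2, h3, h4])
    rw [Finset.sum_eq_single_of_mem _ (Finset.mem_univ (W ω, Y₀ ω, R ω, A ω)) h0,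
      Set.indicator_of_mem ((hmemC _ _ _ _ ω).2 ⟨rfl, rfl, rfl, rfl⟩)]
  have hsplit : ∀ (f : Ω → ℝ),
      (∀ z : 𝒲 × 𝒴₀ × Fin 2 × Fin 2,
        Integrable ((C z.1 z.2.1 z.2.2.1 z.2.2.2).indicator f) μ) →
      ∫ ω, f ω ∂μ = ∑ z : 𝒲 × 𝒴₀ × Fin 2 × Fin 2,
        ∫ ω, (C z.1 z.2.1 z.2.2.1 z.2.2.2).indicator f ω ∂μ := by
    intro f hf
    rw [integral_congr_ae (Filter.Eventually.of_forall (hpart f)),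
      integral_finset_sum _ fun z _ => hf z]
  have hintNat : ∀ (b : Fin 2), Integrable (Ynat b) μ → ∫ ω, Ynat b ω ∂μ
      = ∑ z : 𝒲 × 𝒴₀ × Fin 2 × Fin 2,
        (μ (C z.1 z.2.1 z.2.2.1 z.2.2.2)).toReal * Mv z.2.2.1 z.1 z.2.1 b := by
    intro b hb
    rw [hsplit (Ynat b) (fun z => hb.indicator (hCmeas _ _ _ _))]
    refine Finset.sum_congr rfl fun z _ => ?_
    obtain ⟨w, y, r, a⟩ := z
    have hind : (C w y r a).indicator (Ynat b) = (C w y r a).indicator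
        (fun ω => (fun u => if r = 1 then fY (w, y, b, u) else gY (w, b, u)) (UY ω)) := by
      funext ω; by_cases hω : ω ∈ C w y r a
      · rw [Set.indicator_of_mem hω, Set.indicator_of_mem hω]; exact hYnatC w y r a b ω hω
      · rw [Set.indicator_of_notMem hω, Set.indicator_of_notMem hω]
    rw [hind, key _ (hCMsup w y r a) _ (hhm w y r b)]
    by_cases hr : r = 1
    · simp [hMv, hr]
    · simp [hMv, hr]
  rw [hintNat 1 hIntN1, hintNat 0 hIntN0, hsplit _ hFint, ← Finset.sum_sub_distrib]
  refine Finset.sum_congr rfl fun z _ => ?_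
  obtain ⟨w, y, r, a⟩ := z
  rw [hcell w y r a]
  ring
end

section
/- In the discrete lm-SCM for the motivating example (Figure 1c), under Positivity, the population version of the DR.F (doubly-robust FATE) construction with true nuisance components recovers the FATE: defining τ(w) := Σ_{y ∈ 𝒴₀} μ(Y₀ = y | W = w, R = 1) · (Q₁(w, y, 1) − Q₁(w, y, 0)) and e(w) := μ(R = 1 | W = w) (which is strictly positive under Positivity), one has E[ τ(W) + (R / e(W)) · ( (Q₁(W, Y₀, 1) − Q₁(W, Y₀, 0)) − τ(W) ) ] = φ, where Q₁(w, y, a) := E[Y₁ | W = w, Y₀ = y, A = a, R = 1]. -/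
open MeasureTheory ProbabilityTheory

lemma setIntegral_comp_factor {Ω U : Type*} [MeasurableSpace Ω] [MeasurableSpace U]
    (μ : Measure Ω) (UY : Ω → U) (hUY : Measurable UY) (E : Set Ω)
    (hfact : ∀ F : Set U, MeasurableSet F → μ (E ∩ UY ⁻¹' F) = μ E * μ (UY ⁻¹' F))
    (h : U → ℝ) (hh : Measurable h) :
    ∫ ω in E, h (UY ω) ∂μ = (μ E).toReal * ∫ ω, h (UY ω) ∂μ := by
  have hmap : (μ.restrict E).map UY = μ E • μ.map UY := by
    ext F hF
    rw [Measure.map_apply hUY hF, Measure.restrict_apply (hUY hF),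
      Measure.smul_apply, smul_eq_mul, Measure.map_apply hUY hF, Set.inter_comm, hfact F hF]
  calc ∫ ω in E, h (UY ω) ∂μ
      = ∫ u, h u ∂((μ.restrict E).map UY) :=
        (integral_map hUY.aemeasurable hh.aestronglyMeasurable).symm
    _ = (μ E).toReal * ∫ u, h u ∂(μ.map UY) := by
        rw [hmap, integral_smul_measure]; rfl
    _ = (μ E).toReal * ∫ ω, h (UY ω) ∂μ := by
        rw [integral_map hUY.aemeasurable hh.aestronglyMeasurable]

lemma meas_inter_five {Ω 𝒲 𝒰₀ 𝒰R 𝒰A 𝒰Y : Type*} [MeasurableSpace Ω]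
    [MeasurableSpace 𝒲] [MeasurableSpace 𝒰₀] [MeasurableSpace 𝒰R]
    [MeasurableSpace 𝒰A] [MeasurableSpace 𝒰Y]
    (μ : Measure Ω)
    (W : Ω → 𝒲) (U₀ : Ω → 𝒰₀) (UR : Ω → 𝒰R) (UA : Ω → 𝒰A) (UY : Ω → 𝒰Y)
    (hIndep : iIndep
      (![MeasurableSpace.comap W inferInstance, MeasurableSpace.comap U₀ inferInstance,
         MeasurableSpace.comap UR inferInstance, MeasurableSpace.comap UA inferInstance,
         MeasurableSpace.comap UY inferInstance] : Fin 5 → MeasurableSpace Ω) μ)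
    (T0 : Set 𝒲) (T1 : Set 𝒰₀) (T2 : Set 𝒰R) (T3 : Set 𝒰A) (T4 : Set 𝒰Y)
    (h0 : MeasurableSet T0) (h1 : MeasurableSet T1) (h2 : MeasurableSet T2)
    (h3 : MeasurableSet T3) (h4 : MeasurableSet T4) :
    μ (W ⁻¹' T0 ∩ U₀ ⁻¹' T1 ∩ UR ⁻¹' T2 ∩ UA ⁻¹' T3 ∩ UY ⁻¹' T4)
      = μ (W ⁻¹' T0) * μ (U₀ ⁻¹' T1) * μ (UR ⁻¹' T2) * μ (UA ⁻¹' T3) * μ (UY ⁻¹' T4) := by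
  have key := hIndep.meas_iInter
    (s := ![W ⁻¹' T0, U₀ ⁻¹' T1, UR ⁻¹' T2, UA ⁻¹' T3, UY ⁻¹' T4]) ?_
  · have hset : (⋂ i, (![W ⁻¹' T0, U₀ ⁻¹' T1, UR ⁻¹' T2, UA ⁻¹' T3, UY ⁻¹' T4]) i)
        = W ⁻¹' T0 ∩ U₀ ⁻¹' T1 ∩ UR ⁻¹' T2 ∩ UA ⁻¹' T3 ∩ UY ⁻¹' T4 := by
      ext ω
      simp [Set.mem_iInter, Fin.forall_fin_succ, and_assoc]
    rw [hset] at key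
    rw [key, Fin.prod_univ_five]
    simp
  · intro i
    fin_cases i
    · exact ⟨T0, h0, rfl⟩
    · exact ⟨T1, h1, rfl⟩
    · exact ⟨T2, h2, rfl⟩
    · exact ⟨T3, h3, rfl⟩
    · exact ⟨T4, h4, rfl⟩

/-- In the discrete lm-SCM of Figure 1c, under positivity, the population version of the DR.F construction with true nuisance components recovers the FATE. -/
theorem lmSCM_drf_unbiased
    {Ω 𝒲 𝒴₀ 𝒰₀ 𝒰R 𝒰A 𝒰Y : Type*}
    [MeasurableSpace Ω]
    [Fintype 𝒲] [Nonempty 𝒲] [MeasurableSpace 𝒲] [MeasurableSingletonClass 𝒲]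
    [Fintype 𝒴₀] [Nonempty 𝒴₀] [MeasurableSpace 𝒴₀] [MeasurableSingletonClass 𝒴₀]
    [MeasurableSpace 𝒰₀] [MeasurableSpace 𝒰R] [MeasurableSpace 𝒰A] [MeasurableSpace 𝒰Y]
    (μ : Measure Ω) [IsProbabilityMeasure μ]
    (W : Ω → 𝒲) (U₀ : Ω → 𝒰₀) (UR : Ω → 𝒰R) (UA : Ω → 𝒰A) (UY : Ω → 𝒰Y)
    (hW : Measurable W) (hU₀ : Measurable U₀) (hUR : Measurable UR)
    (hUA : Measurable UA) (hUY : Measurable UY)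
    (hIndep : iIndep
      (![MeasurableSpace.comap W inferInstance, MeasurableSpace.comap U₀ inferInstance,
         MeasurableSpace.comap UR inferInstance, MeasurableSpace.comap UA inferInstance,
         MeasurableSpace.comap UY inferInstance] : Fin 5 → MeasurableSpace Ω) μ)
    (f₀ : 𝒲 × 𝒰₀ → 𝒴₀) (hf₀ : Measurable f₀)
    (fR : 𝒲 × 𝒰R → Fin 2) (hfR : Measurable fR)
    (fA : 𝒲 × 𝒴₀ × 𝒰A → Fin 2) (hfA : Measurable fA)
    (gA : 𝒲 × 𝒰A → Fin 2) (hgA : Measurable gA)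
    (fY : 𝒲 × 𝒴₀ × Fin 2 × 𝒰Y → ℝ) (hfY : Measurable fY)
    (gY : 𝒲 × Fin 2 × 𝒰Y → ℝ) (hgY : Measurable gY)
    (Y₀ : Ω → 𝒴₀) (R A : Ω → Fin 2) (Y₁ : Ω → ℝ)
    (hY₀ : ∀ ω, Y₀ ω = f₀ (W ω, U₀ ω))
    (hR : ∀ ω, R ω = fR (W ω, UR ω))
    (hA : ∀ ω, A ω = if R ω = 1 then fA (W ω, Y₀ ω, UA ω) else gA (W ω, UA ω))
    (hY₁ : ∀ ω, Y₁ ω = if R ω = 1 then fY (W ω, Y₀ ω, A ω, UY ω) else gY (W ω, A ω, UY ω))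
    (Ynat : Fin 2 → Ω → ℝ)
    (hYnat : ∀ (a : Fin 2) (ω : Ω),
      Ynat a ω = if R ω = 1 then fY (W ω, Y₀ ω, a, UY ω) else gY (W ω, a, UY ω))
    (Yful : Fin 2 → Ω → ℝ)
    (hYful : ∀ (a : Fin 2) (ω : Ω), Yful a ω = fY (W ω, Y₀ ω, a, UY ω))
    (hIntY₁ : Integrable Y₁ μ)
    (hIntN0 : Integrable (Ynat 0) μ) (hIntN1 : Integrable (Ynat 1) μ)
    (hIntF0 : Integrable (Yful 0) μ) (hIntF1 : Integrable (Yful 1) μ)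
    (hpos : ∀ (w : 𝒲) (y : 𝒴₀) (r a : Fin 2),
      0 < μ {ω | W ω = w ∧ Y₀ ω = y ∧ R ω = r ∧ A ω = a})
    (Q1 : 𝒲 → 𝒴₀ → Fin 2 → ℝ)
    (hQ1 : ∀ (w : 𝒲) (y : 𝒴₀) (a : Fin 2),
      Q1 w y a = cexp μ Y₁ {ω | W ω = w ∧ Y₀ ω = y ∧ A ω = a ∧ R ω = 1})
    (Q0 : 𝒲 → Fin 2 → ℝ)
    (hQ0 : ∀ (w : 𝒲) (a : Fin 2), Q0 w a = cexp μ Y₁ {ω | W ω = w ∧ A ω = a ∧ R ω = 0})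
    (τ : 𝒲 → ℝ)
    (hτ : ∀ w : 𝒲, τ w = ∑ y : 𝒴₀,
      (cprob μ {ω | Y₀ ω = y} {ω | W ω = w ∧ R ω = 1}).toReal * (Q1 w y 1 - Q1 w y 0))
    (e : 𝒲 → ℝ)
    (he : ∀ w : 𝒲, e w = (cprob μ {ω | R ω = 1} {ω | W ω = w}).toReal)
    :
    ∫ ω, (τ (W ω)
          + (((R ω : ℕ) : ℝ) / e (W ω))
              * ((Q1 (W ω) (Y₀ ω) 1 - Q1 (W ω) (Y₀ ω) 0) - τ (W ω))) ∂μ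
      = (∫ ω, Yful 1 ω ∂μ) - (∫ ω, Yful 0 ω ∂μ) := by
  classical
  -- measurability of structural variables
  have hY₀m : Measurable Y₀ := by
    have h : Y₀ = fun ω => f₀ (W ω, U₀ ω) := funext hY₀
    rw [h]; exact hf₀.comp (hW.prodMk hU₀)
  have hRm : Measurable R := by
    have h : R = fun ω => fR (W ω, UR ω) := funext hR
    rw [h]; exact hfR.comp (hW.prodMk hUR)
  -- measurability of fiber sets
  have hS0m : ∀ (w : 𝒲) (y : 𝒴₀), MeasurableSet {u : 𝒰₀ | f₀ (w, u) = y} := fun w y =>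
    (hf₀.comp measurable_prodMk_left) (measurableSet_singleton y)
  have hSRm : ∀ (w : 𝒲) (r : Fin 2), MeasurableSet {u : 𝒰R | fR (w, u) = r} := fun w r =>
    (hfR.comp measurable_prodMk_left) (measurableSet_singleton r)
  have hSAm : ∀ (w : 𝒲) (y : 𝒴₀) (a : Fin 2), MeasurableSet {u : 𝒰A | fA (w, y, u) = a} := by
    intro w y a
    have hm : Measurable fun u : 𝒰A => fA (w, y, u) :=
      hfA.comp (measurable_const.prodMk (measurable_const.prodMk measurable_id))
    exact hm (measurableSet_singleton a)
  have hIm : ∀ (w : 𝒲) (y : 𝒴₀) (a : Fin 2), Measurable fun u : 𝒰Y => fY (w, y, a, u) := by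
    intro w y a
    exact hfY.comp (measurable_const.prodMk (measurable_const.prodMk
      (measurable_const.prodMk measurable_id)))
  have hprod := meas_inter_five μ W U₀ UR UA UY hIndep
  -- set identities
  have hXset : ∀ (w : 𝒲) (y : 𝒴₀) (r : Fin 2),
      {ω | W ω = w ∧ Y₀ ω = y ∧ R ω = r}
        = W ⁻¹' {w} ∩ U₀ ⁻¹' {u | f₀ (w, u) = y} ∩ UR ⁻¹' {u | fR (w, u) = r} := by
    intro w y r
    ext ω
    simp only [Set.mem_setOf_eq, Set.mem_inter_iff, Set.mem_preimage, Set.mem_singleton_iff]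
    constructor
    · rintro ⟨hw, hy, hr'⟩
      refine ⟨⟨hw, ?_⟩, ?_⟩
      · rw [← hw]; exact (hY₀ ω).symm.trans hy
      · rw [← hw]; exact (hR ω).symm.trans hr'
    · rintro ⟨⟨hw, hy⟩, hr'⟩
      exact ⟨hw, by rw [hY₀ ω, hw]; exact hy, by rw [hR ω, hw]; exact hr'⟩
  have hE1set : ∀ (w : 𝒲) (y : 𝒴₀) (a : Fin 2),
      {ω | W ω = w ∧ Y₀ ω = y ∧ A ω = a ∧ R ω = 1}
        = W ⁻¹' {w} ∩ U₀ ⁻¹' {u | f₀ (w, u) = y} ∩ UR ⁻¹' {u | fR (w, u) = 1}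
            ∩ UA ⁻¹' {u | fA (w, y, u) = a} := by
    intro w y a
    ext ω
    simp only [Set.mem_setOf_eq, Set.mem_inter_iff, Set.mem_preimage, Set.mem_singleton_iff]
    constructor
    · rintro ⟨hw, hy, ha', hr'⟩
      refine ⟨⟨⟨hw, ?_⟩, ?_⟩, ?_⟩
      · rw [← hw]; exact (hY₀ ω).symm.trans hy
      · rw [← hw]; exact (hR ω).symm.trans hr'
      · have := hA ω
        rw [if_pos hr'] at this
        rw [← hw, ← hy]; exact this.symm.trans ha'
    · rintro ⟨⟨⟨hw, hy⟩, hr'⟩, ha'⟩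
      have hYy : Y₀ ω = y := by rw [hY₀ ω, hw]; exact hy
      have hR1 : R ω = 1 := by rw [hR ω, hw]; exact hr'
      refine ⟨hw, hYy, ?_, hR1⟩
      rw [hA ω, if_pos hR1, hw, hYy]; exact ha'
  -- measures of basic events
  have hm4 : ∀ (w : 𝒲) (y : 𝒴₀) (a : Fin 2),
      μ (W ⁻¹' {w} ∩ U₀ ⁻¹' {u | f₀ (w, u) = y} ∩ UR ⁻¹' {u | fR (w, u) = 1}
          ∩ UA ⁻¹' {u | fA (w, y, u) = a})
        = μ (W ⁻¹' {w}) * μ (U₀ ⁻¹' {u | f₀ (w, u) = y}) * μ (UR ⁻¹' {u | fR (w, u) = 1})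
            * μ (UA ⁻¹' {u | fA (w, y, u) = a}) := by
    intro w y a
    simpa using hprod {w} {u | f₀ (w, u) = y} {u | fR (w, u) = 1} {u | fA (w, y, u) = a}
      Set.univ (measurableSet_singleton w) (hS0m w y) (hSRm w 1) (hSAm w y a) MeasurableSet.univ
  have hm4F : ∀ (w : 𝒲) (y : 𝒴₀) (a : Fin 2) (F : Set 𝒰Y), MeasurableSet F →
      μ ((W ⁻¹' {w} ∩ U₀ ⁻¹' {u | f₀ (w, u) = y} ∩ UR ⁻¹' {u | fR (w, u) = 1}
          ∩ UA ⁻¹' {u | fA (w, y, u) = a}) ∩ UY ⁻¹' F)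
        = μ (W ⁻¹' {w} ∩ U₀ ⁻¹' {u | f₀ (w, u) = y} ∩ UR ⁻¹' {u | fR (w, u) = 1}
            ∩ UA ⁻¹' {u | fA (w, y, u) = a}) * μ (UY ⁻¹' F) := by
    intro w y a F hF
    rw [hm4 w y a]
    exact hprod {w} {u | f₀ (w, u) = y} {u | fR (w, u) = 1} {u | fA (w, y, u) = a} F
      (measurableSet_singleton w) (hS0m w y) (hSRm w 1) (hSAm w y a) hF
  have hmB : ∀ (w : 𝒲) (y : 𝒴₀),
      μ (W ⁻¹' {w} ∩ U₀ ⁻¹' {u | f₀ (w, u) = y})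
        = μ (W ⁻¹' {w}) * μ (U₀ ⁻¹' {u | f₀ (w, u) = y}) := by
    intro w y
    simpa using hprod {w} {u | f₀ (w, u) = y} Set.univ Set.univ Set.univ
      (measurableSet_singleton w) (hS0m w y) MeasurableSet.univ MeasurableSet.univ
      MeasurableSet.univ
  have hmBF : ∀ (w : 𝒲) (y : 𝒴₀) (F : Set 𝒰Y), MeasurableSet F →
      μ ((W ⁻¹' {w} ∩ U₀ ⁻¹' {u | f₀ (w, u) = y}) ∩ UY ⁻¹' F)
        = μ (W ⁻¹' {w} ∩ U₀ ⁻¹' {u | f₀ (w, u) = y}) * μ (UY ⁻¹' F) := by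
    intro w y F hF
    rw [hmB w y]
    have h := hprod {w} {u | f₀ (w, u) = y} Set.univ Set.univ F
      (measurableSet_singleton w) (hS0m w y) MeasurableSet.univ MeasurableSet.univ hF
    simpa using h
  have hmX : ∀ (w : 𝒲) (y : 𝒴₀) (r : Fin 2),
      μ {ω | W ω = w ∧ Y₀ ω = y ∧ R ω = r}
        = μ (W ⁻¹' {w}) * μ (U₀ ⁻¹' {u | f₀ (w, u) = y}) * μ (UR ⁻¹' {u | fR (w, u) = r}) := by
    intro w y r
    rw [hXset w y r]
    simpa using hprod {w} {u | f₀ (w, u) = y} {u | fR (w, u) = r} Set.univ Set.univ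
      (measurableSet_singleton w) (hS0m w y) (hSRm w r) MeasurableSet.univ MeasurableSet.univ
  -- positivity consequences
  have hE1pos : ∀ (w : 𝒲) (y : 𝒴₀) (a : Fin 2),
      μ (W ⁻¹' {w} ∩ U₀ ⁻¹' {u | f₀ (w, u) = y} ∩ UR ⁻¹' {u | fR (w, u) = 1}
          ∩ UA ⁻¹' {u | fA (w, y, u) = a}) ≠ 0 := by
    intro w y a
    have h := hpos w y 1 a
    have hswap : {ω | W ω = w ∧ Y₀ ω = y ∧ R ω = (1 : Fin 2) ∧ A ω = a}
        = {ω | W ω = w ∧ Y₀ ω = y ∧ A ω = a ∧ R ω = 1} := by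
      ext ω; constructor <;> rintro ⟨h1, h2, h3, h4⟩ <;> exact ⟨h1, h2, h4, h3⟩
    rw [hswap, hE1set w y a] at h
    exact h.ne'
  have hane : ∀ w : 𝒲, μ (W ⁻¹' {w}) ≠ 0 := by
    intro w
    obtain ⟨y⟩ := (inferInstance : Nonempty 𝒴₀)
    have h := hE1pos w y 1
    rw [hm4 w y 1] at h
    simp only [ne_eq, mul_eq_zero, not_or] at h
    exact h.1.1.1
  have hbne : ∀ (w : 𝒲) (y : 𝒴₀), μ (U₀ ⁻¹' {u | f₀ (w, u) = y}) ≠ 0 := by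
    intro w y
    have h := hE1pos w y 1
    rw [hm4 w y 1] at h
    simp only [ne_eq, mul_eq_zero, not_or] at h
    exact h.1.1.2
  have hc1ne : ∀ w : 𝒲, μ (UR ⁻¹' {u | fR (w, u) = 1}) ≠ 0 := by
    intro w
    obtain ⟨y⟩ := (inferInstance : Nonempty 𝒴₀)
    have h := hE1pos w y 1
    rw [hm4 w y 1] at h
    simp only [ne_eq, mul_eq_zero, not_or] at h
    exact h.1.2
  -- e w equals the chance of R = 1 in stratum w
  have heq : ∀ w : 𝒲, e w = (μ (UR ⁻¹' {u | fR (w, u) = 1})).toReal := by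
    intro w
    rw [he w]
    congr 1
    show μ ({ω | R ω = 1} ∩ {ω | W ω = w}) / μ {ω | W ω = w}
        = μ (UR ⁻¹' {u | fR (w, u) = 1})
    have hset : {ω | R ω = 1} ∩ {ω | W ω = w}
        = W ⁻¹' {w} ∩ UR ⁻¹' {u | fR (w, u) = 1} := by
      ext ω
      simp only [Set.mem_setOf_eq, Set.mem_inter_iff, Set.mem_preimage, Set.mem_singleton_iff]
      constructor
      · rintro ⟨hr', hw⟩
        exact ⟨hw, by rw [← hw]; exact (hR ω).symm.trans hr'⟩
      · rintro ⟨hw, hr'⟩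
        exact ⟨by rw [hR ω, hw]; exact hr', hw⟩
    have hmm : μ (W ⁻¹' {w} ∩ UR ⁻¹' {u | fR (w, u) = 1})
        = μ (W ⁻¹' {w}) * μ (UR ⁻¹' {u | fR (w, u) = 1}) := by
      simpa using hprod {w} Set.univ {u | fR (w, u) = 1} Set.univ Set.univ
        (measurableSet_singleton w) MeasurableSet.univ (hSRm w 1) MeasurableSet.univ
        MeasurableSet.univ
    have hWset : {ω | W ω = w} = W ⁻¹' {w} := rfl
    rw [hset, hmm, hWset, mul_comm, mul_div_assoc,
      ENNReal.div_self (hane w) (measure_ne_top μ _), mul_one]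
  -- value of Q1
  have hQ1I : ∀ (w : 𝒲) (y : 𝒴₀) (a : Fin 2),
      Q1 w y a = ∫ ω, fY (w, y, a, UY ω) ∂μ := by
    intro w y a
    rw [hQ1 w y a]
    simp only [cexp]
    rw [hE1set w y a]
    have hEm : MeasurableSet (W ⁻¹' {w} ∩ U₀ ⁻¹' {u | f₀ (w, u) = y}
        ∩ UR ⁻¹' {u | fR (w, u) = 1} ∩ UA ⁻¹' {u | fA (w, y, u) = a}) :=
      (((hW (measurableSet_singleton w)).inter (hU₀ (hS0m w y))).inter
        (hUR (hSRm w 1))).inter (hUA (hSAm w y a))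
    have hcongr : ∫ ω in (W ⁻¹' {w} ∩ U₀ ⁻¹' {u | f₀ (w, u) = y}
        ∩ UR ⁻¹' {u | fR (w, u) = 1} ∩ UA ⁻¹' {u | fA (w, y, u) = a}), Y₁ ω ∂μ
        = ∫ ω in (W ⁻¹' {w} ∩ U₀ ⁻¹' {u | f₀ (w, u) = y}
            ∩ UR ⁻¹' {u | fR (w, u) = 1} ∩ UA ⁻¹' {u | fA (w, y, u) = a}),
            fY (w, y, a, UY ω) ∂μ := by
      refine setIntegral_congr_fun hEm ?_
      rintro ω ⟨⟨⟨hw, h0⟩, hr'⟩, ha'⟩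
      have hWw : W ω = w := hw
      have hYy : Y₀ ω = y := by rw [hY₀ ω, hWw]; exact h0
      have hR1 : R ω = 1 := by rw [hR ω, hWw]; exact hr'
      have hAa : A ω = a := by rw [hA ω, if_pos hR1, hWw, hYy]; exact ha'
      show Y₁ ω = fY (w, y, a, UY ω)
      rw [hY₁ ω, if_pos hR1, hWw, hYy, hAa]
    rw [hcongr, setIntegral_comp_factor μ UY hUY _ (hm4F w y a) _ (hIm w y a)]
    have hne : (μ (W ⁻¹' {w} ∩ U₀ ⁻¹' {u | f₀ (w, u) = y}
        ∩ UR ⁻¹' {u | fR (w, u) = 1} ∩ UA ⁻¹' {u | fA (w, y, u) = a})).toReal ≠ 0 :=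
      ENNReal.toReal_ne_zero.mpr ⟨hE1pos w y a, measure_ne_top μ _⟩
    exact inv_mul_cancel_left₀ hne _
  -- RHS decomposition
  have hRHS : ∀ a : Fin 2, Integrable (Yful a) μ →
      ∫ ω, Yful a ω ∂μ = ∑ w : 𝒲, ∑ y : 𝒴₀,
        (μ (W ⁻¹' {w} ∩ U₀ ⁻¹' {u | f₀ (w, u) = y})).toReal
          * ∫ ω, fY (w, y, a, UY ω) ∂μ := by
    intro a hInt
    have hBm : ∀ p : 𝒲 × 𝒴₀,
        MeasurableSet (W ⁻¹' {p.1} ∩ U₀ ⁻¹' {u | f₀ (p.1, u) = p.2}) := fun p =>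
      (hW (measurableSet_singleton p.1)).inter (hU₀ (hS0m p.1 p.2))
    have hdisj : Pairwise (Function.onFun Disjoint
        fun p : 𝒲 × 𝒴₀ => W ⁻¹' {p.1} ∩ U₀ ⁻¹' {u | f₀ (p.1, u) = p.2}) := by
      intro p q hpq
      rw [Function.onFun, Set.disjoint_left]
      rintro ω ⟨hw1, h01⟩ ⟨hw2, h02⟩
      apply hpq
      have hw1' : W ω = p.1 := hw1
      have hw2' : W ω = q.1 := hw2
      have h1 : p.1 = q.1 := hw1'.symm.trans hw2'
      have h01' : f₀ (p.1, U₀ ω) = p.2 := h01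
      have h02' : f₀ (q.1, U₀ ω) = q.2 := h02
      have h2 : p.2 = q.2 := by rw [← h01', ← h02', h1]
      exact Prod.ext h1 h2
    have hcover : (⋃ p : 𝒲 × 𝒴₀, W ⁻¹' {p.1} ∩ U₀ ⁻¹' {u | f₀ (p.1, u) = p.2})
        = Set.univ := by
      ext ω
      simp only [Set.mem_iUnion, Set.mem_univ, iff_true]
      exact ⟨(W ω, Y₀ ω), rfl, (hY₀ ω).symm⟩
    calc ∫ ω, Yful a ω ∂μ
        = ∫ ω in (⋃ p : 𝒲 × 𝒴₀, W ⁻¹' {p.1} ∩ U₀ ⁻¹' {u | f₀ (p.1, u) = p.2}),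
            Yful a ω ∂μ := by rw [hcover, setIntegral_univ]
      _ = ∑' p : 𝒲 × 𝒴₀, ∫ ω in (W ⁻¹' {p.1} ∩ U₀ ⁻¹' {u | f₀ (p.1, u) = p.2}),
            Yful a ω ∂μ := integral_iUnion hBm hdisj (by rw [hcover]; exact hInt.integrableOn)
      _ = ∑ p : 𝒲 × 𝒴₀, ∫ ω in (W ⁻¹' {p.1} ∩ U₀ ⁻¹' {u | f₀ (p.1, u) = p.2}),
            Yful a ω ∂μ := tsum_fintype _
      _ = ∑ p : 𝒲 × 𝒴₀, (μ (W ⁻¹' {p.1} ∩ U₀ ⁻¹' {u | f₀ (p.1, u) = p.2})).toReal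
            * ∫ ω, fY (p.1, p.2, a, UY ω) ∂μ := by
          refine Finset.sum_congr rfl fun p _ => ?_
          have hcongr : ∫ ω in (W ⁻¹' {p.1} ∩ U₀ ⁻¹' {u | f₀ (p.1, u) = p.2}),
              Yful a ω ∂μ
              = ∫ ω in (W ⁻¹' {p.1} ∩ U₀ ⁻¹' {u | f₀ (p.1, u) = p.2}),
                  fY (p.1, p.2, a, UY ω) ∂μ := by
            refine setIntegral_congr_fun (hBm p) ?_
            rintro ω ⟨hw, h0⟩
            have hWw : W ω = p.1 := hw
            have hYy : Y₀ ω = p.2 := by rw [hY₀ ω, hWw]; exact h0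
            show Yful a ω = fY (p.1, p.2, a, UY ω)
            rw [hYful a ω, hWw, hYy]
          rw [hcongr, setIntegral_comp_factor μ UY hUY _ (hmBF p.1 p.2) _ (hIm p.1 p.2 a)]
      _ = ∑ w : 𝒲, ∑ y : 𝒴₀, (μ (W ⁻¹' {w} ∩ U₀ ⁻¹' {u | f₀ (w, u) = y})).toReal
            * ∫ ω, fY (w, y, a, UY ω) ∂μ := Fintype.sum_prod_type _
  -- LHS decomposition
  have hXmeas : Measurable fun ω => (W ω, Y₀ ω, R ω) := hW.prodMk (hY₀m.prodMk hRm)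
  haveI : IsProbabilityMeasure (μ.map fun ω => (W ω, Y₀ ω, R ω)) :=
    Measure.isProbabilityMeasure_map hXmeas.aemeasurable
  have hmapp : ∀ p : 𝒲 × 𝒴₀ × Fin 2,
      (μ.map fun ω => (W ω, Y₀ ω, R ω)) {p}
        = μ {ω | W ω = p.1 ∧ Y₀ ω = p.2.1 ∧ R ω = p.2.2} := by
    intro p
    rw [Measure.map_apply hXmeas (measurableSet_singleton p)]
    congr 1
    ext ω
    simp [Prod.ext_iff]
  have hLHS : ∫ ω, (τ (W ω)
        + (((R ω : ℕ) : ℝ) / e (W ω))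
            * ((Q1 (W ω) (Y₀ ω) 1 - Q1 (W ω) (Y₀ ω) 0) - τ (W ω))) ∂μ
      = ∑ w : 𝒲, ∑ y : 𝒴₀, ∑ r : Fin 2,
          (μ {ω | W ω = w ∧ Y₀ ω = y ∧ R ω = r}).toReal
            * (τ w + (((r : ℕ) : ℝ) / e w) * ((Q1 w y 1 - Q1 w y 0) - τ w)) := by
    calc ∫ ω, (τ (W ω)
          + (((R ω : ℕ) : ℝ) / e (W ω))
              * ((Q1 (W ω) (Y₀ ω) 1 - Q1 (W ω) (Y₀ ω) 0) - τ (W ω))) ∂μ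
        = ∫ p, (fun p : 𝒲 × 𝒴₀ × Fin 2 =>
            τ p.1 + (((p.2.2 : ℕ) : ℝ) / e p.1)
              * ((Q1 p.1 p.2.1 1 - Q1 p.1 p.2.1 0) - τ p.1)) p
            ∂(μ.map fun ω => (W ω, Y₀ ω, R ω)) :=
          (integral_map (φ := fun ω => (W ω, Y₀ ω, R ω))
            (f := fun p : 𝒲 × 𝒴₀ × Fin 2 =>
              τ p.1 + (((p.2.2 : ℕ) : ℝ) / e p.1)
                * ((Q1 p.1 p.2.1 1 - Q1 p.1 p.2.1 0) - τ p.1))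
            hXmeas.aemeasurable
            (Measurable.of_discrete).aestronglyMeasurable).symm
      _ = ∑ p : 𝒲 × 𝒴₀ × Fin 2,
            ((μ.map fun ω => (W ω, Y₀ ω, R ω)) {p}).toReal
              • (τ p.1 + (((p.2.2 : ℕ) : ℝ) / e p.1)
                  * ((Q1 p.1 p.2.1 1 - Q1 p.1 p.2.1 0) - τ p.1)) :=
          integral_fintype (Integrable.of_finite)
      _ = ∑ w : 𝒲, ∑ y : 𝒴₀, ∑ r : Fin 2,
            (μ {ω | W ω = w ∧ Y₀ ω = y ∧ R ω = r}).toReal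
              * (τ w + (((r : ℕ) : ℝ) / e w) * ((Q1 w y 1 - Q1 w y 0) - τ w)) := by
          rw [Fintype.sum_prod_type]
          refine Finset.sum_congr rfl fun w _ => ?_
          rw [Fintype.sum_prod_type]
          refine Finset.sum_congr rfl fun y _ => Finset.sum_congr rfl fun r _ => ?_
          rw [hmapp (w, y, r), smul_eq_mul]
  -- chances of R = 0 and R = 1 sum to one
  have hcsum : ∀ w : 𝒲, (μ (UR ⁻¹' {u | fR (w, u) = (0 : Fin 2)})).toReal
      + (μ (UR ⁻¹' {u | fR (w, u) = 1})).toReal = 1 := by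
    intro w
    have hd : Disjoint {u : 𝒰R | fR (w, u) = 0} {u : 𝒰R | fR (w, u) = 1} := by
      rw [Set.disjoint_left]
      intro u h0 h1
      have h0' : fR (w, u) = 0 := h0
      have h1' : fR (w, u) = 1 := h1
      exact absurd (h0'.symm.trans h1') (by decide)
    have hu : UR ⁻¹' {u : 𝒰R | fR (w, u) = 0} ∪ UR ⁻¹' {u : 𝒰R | fR (w, u) = 1}
        = Set.univ := by
      ext ω
      simp only [Set.mem_union, Set.mem_preimage, Set.mem_setOf_eq, Set.mem_univ, iff_true]
      have : ∀ x : Fin 2, x = 0 ∨ x = 1 := by decide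
      exact this _
    have key : μ (UR ⁻¹' {u : 𝒰R | fR (w, u) = 0}) + μ (UR ⁻¹' {u : 𝒰R | fR (w, u) = 1})
        = 1 := by
      rw [← measure_union (hd.preimage UR) (hUR (hSRm w 1)), hu, measure_univ]
    rw [← ENNReal.toReal_add (measure_ne_top μ _) (measure_ne_top μ _), key,
      ENNReal.toReal_one]
  -- final computation
  rw [hLHS, hRHS 1 hIntF1, hRHS 0 hIntF0, ← Finset.sum_sub_distrib]
  refine Finset.sum_congr rfl fun w _ => ?_
  rw [← Finset.sum_sub_distrib]
  refine Finset.sum_congr rfl fun y _ => ?_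
  rw [Fin.sum_univ_two, hmX w y 0, hmX w y 1, hmB w y, hQ1I w y 1, hQ1I w y 0, heq w]
  have hC1ne : (μ (UR ⁻¹' {u | fR (w, u) = 1})).toReal ≠ 0 :=
    ENNReal.toReal_ne_zero.mpr ⟨hc1ne w, measure_ne_top μ _⟩
  have hsum := hcsum w
  simp only [ENNReal.toReal_mul, Fin.val_zero, Fin.val_one, Nat.cast_zero, Nat.cast_one]
  set Av := (μ (W ⁻¹' {w})).toReal
  set Bv := (μ (U₀ ⁻¹' {u | f₀ (w, u) = y})).toReal
  set C0 := (μ (UR ⁻¹' {u | fR (w, u) = (0 : Fin 2)})).toReal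
  set C1 := (μ (UR ⁻¹' {u | fR (w, u) = 1})).toReal
  set I1 := ∫ ω, fY (w, y, 1, UY ω) ∂μ
  set I0 := ∫ ω, fY (w, y, 0, UY ω) ∂μ
  have hC0 : C0 = 1 - C1 := by linarith
  rw [hC0]
  field_simp
  ring
end
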